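/- arXiv:2209.05992 — 5 statements merged into one kernel-verified Lean document; each statement's English description precedes it below -/
import Mathlib

section
/- Let G be a graph and c₁ a proper k-coloring of G that has a color class containing at most one vertex. Then for any proper k-coloring c of G, there exists a proper k-coloring c₂ of G that shares a color class with c (i.e., some color class of c₂ equals some color class of c as a set of vertices) such that c₂ is obtained from c₁ by a sequence of single-vertex recolorings, each vertex being recolored at most once, with every intermediate coloring proper. -/
/-- A proper coloring: adjacent vertices get different colors. -/
def Proper {V α : Type} (G : SimpleGraph V) (c : V → α) : Prop :=
  ∀ ⦃a b⦄, G.Adj a b → c a ≠ c b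

/-- Number of steps of the sequence `σ` (of length `n`) at which the vertex `u`
is recolored. -/
noncomputable def recolorCount {V α : Type} (σ : ℕ → V → α) (n : ℕ) (u : V) : ℕ :=
  ({i | i < n ∧ σ i u ≠ σ (i + 1) u}).ncard

/-- A recoloring sequence from `c₁` to `c₂` with `n` single-vertex recoloring steps,
every intermediate coloring being a proper coloring of `G`. -/
def RecolorSeqP {V α : Type} (G : SimpleGraph V) (c₁ c₂ : V → α) (n : ℕ)
    (σ : ℕ → V → α) : Prop :=
  σ 0 = c₁ ∧ σ n = c₂ ∧ (∀ i ≤ n, Proper G (σ i)) ∧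
  ∀ i < n, ∃ v, σ i v ≠ σ (i + 1) v ∧ ∀ u, u ≠ v → σ i u = σ (i + 1) u

/-- if a proper `k`-coloring `c₁` has a color class with at most one vertex,
then for any proper `k`-coloring `c` there is a proper `k`-coloring `c₂` sharing a color
class with `c` which is reachable from `c₁` by single-vertex recolorings, each vertex
being recolored at most once. -/
theorem reach_coloring_sharing_class {V : Type} [Fintype V] (G : SimpleGraph V) (k : ℕ)
    (c₁ : V → Fin k) (h₁ : Proper G c₁) (hsmall : ∃ i, ({v | c₁ v = i}).ncard ≤ 1)
    (c : V → Fin k) (hc : Proper G c) :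
    ∃ (c₂ : V → Fin k) (n : ℕ) (σ : ℕ → V → Fin k),
      Proper G c₂ ∧ (∃ i j : Fin k, {v | c₂ v = i} = {v | c v = j}) ∧
      RecolorSeqP G c₁ c₂ n σ ∧ ∀ v, recolorCount σ n v ≤ 1 := by
  classical
  obtain ⟨i, hi⟩ := hsmall
  -- uniqueness within the small class
  have huniq : ∀ u w, c₁ u = i → c₁ w = i → u = w := by
    intro u w hu hw
    exact (Set.ncard_le_one (Set.toFinite _)).mp hi u hu w hw
  set j : Fin k := if h : ({v | c₁ v = i}).Nonempty then c h.choose else i with hj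
  have hci : ∀ u, c₁ u = i → c u = j := by
    intro u hu
    have hne : ({v | c₁ v = i}).Nonempty := ⟨u, hu⟩
    have : u = hne.choose := huniq u _ hu hne.choose_spec
    rw [hj, dif_pos hne, this]
  set L : List V := (Finset.univ.filter (fun u => c u = j ∧ c₁ u ≠ i)).toList with hL
  have hmemL : ∀ u, u ∈ L ↔ c u = j ∧ c₁ u ≠ i := by
    intro u; simp [hL]
  have hnd : L.Nodup := Finset.nodup_toList _
  set n := L.length with hn
  set σ : ℕ → V → Fin k := fun m u => if u ∈ L ∧ L.idxOf u < m then i else c₁ u with hσ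
  -- basic evaluation
  have hσ0 : σ 0 = c₁ := by
    funext u; simp [hσ]
  have hσn : ∀ u, σ n u = i ↔ c u = j := by
    intro u
    constructor
    · intro h
      by_cases hu : u ∈ L ∧ L.idxOf u < n
      · exact ((hmemL u).mp hu.1).1
      · rw [hσ] at h; simp only [if_neg hu] at h; exact hci u h
    · intro h
      by_cases hu : c₁ u = i
      · have : ¬ (u ∈ L ∧ L.idxOf u < n) := by
          intro ⟨h1, _⟩; exact ((hmemL u).mp h1).2 hu
        simp [hσ, this, hu]
      · have hm : u ∈ L := (hmemL u).mpr ⟨h, hu⟩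
        have : L.idxOf u < n := List.idxOf_lt_length_iff.mpr hm
        simp [hσ, hm, this]
  -- properness of each step
  have hprop : ∀ m, Proper G (σ m) := by
    intro m a b hab heq
    by_cases ha : a ∈ L ∧ L.idxOf a < m <;> by_cases hb : b ∈ L ∧ L.idxOf b < m
    · exact hc hab (((hmemL a).mp ha.1).1.trans ((hmemL b).mp hb.1).1.symm)
    · rw [hσ] at heq; simp only [if_pos ha, if_neg hb] at heq
      exact hc hab (((hmemL a).mp ha.1).1.trans (hci b heq.symm).symm)
    · rw [hσ] at heq; simp only [if_neg ha, if_pos hb] at heq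
      exact hc hab ((hci a heq).trans ((hmemL b).mp hb.1).1.symm)
    · rw [hσ] at heq; simp only [if_neg ha, if_neg hb] at heq
      exact h₁ hab heq
  -- the change at step m is exactly the vertex L[m]
  have hidx : ∀ (m : ℕ) (hm : m < n), L.idxOf (L[m]) = m := by
    intro m hm
    have h1 : L[m] ∈ L := List.getElem_mem _
    have h2 : L.idxOf (L[m]) < L.length := List.idxOf_lt_length_iff.mpr h1
    have := List.getElem_idxOf h2
    exact (hnd.getElem_inj_iff).mp this
  have hflip : ∀ (m : ℕ) (u : V), σ m u ≠ σ (m+1) u → u ∈ L ∧ L.idxOf u = m := by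
    intro m u h
    by_cases h1 : u ∈ L ∧ L.idxOf u < m
    · have h2 : u ∈ L ∧ L.idxOf u < m + 1 := ⟨h1.1, h1.2.trans (Nat.lt_succ_self m)⟩
      exact absurd (by simp [hσ, h1, h2]) h
    · by_cases h2 : u ∈ L ∧ L.idxOf u < m + 1
      · refine ⟨h2.1, ?_⟩
        rcases Nat.lt_succ_iff_lt_or_eq.mp h2.2 with h3 | h3
        · exact absurd ⟨h2.1, h3⟩ h1
        · exact h3
      · exact absurd (by simp only [hσ, if_neg h1, if_neg h2]) h
  refine ⟨σ n, n, σ, hprop n, ⟨i, j, Set.ext fun u => hσn u⟩, ⟨hσ0, rfl, fun m _ => hprop m, ?_⟩, ?_⟩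
  · intro m hm
    refine ⟨L[m], ?_, ?_⟩
    · have hmem : L[m] ∈ L := List.getElem_mem _
      have h1 : ¬ (L[m] ∈ L ∧ L.idxOf (L[m]) < m) := by
        intro ⟨_, h⟩; rw [hidx m hm] at h; exact lt_irrefl _ h
      have h2 : L[m] ∈ L ∧ L.idxOf (L[m]) < m + 1 := ⟨hmem, by rw [hidx m hm]; exact Nat.lt_succ_self m⟩
      have h3 : σ m L[m] = c₁ L[m] := by simp only [hσ]; rw [if_neg h1]
      have h4 : σ (m+1) L[m] = i := by simp only [hσ]; rw [if_pos h2]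
      rw [h3, h4]
      exact ((hmemL _).mp hmem).2
    · intro u hu
      by_contra h
      obtain ⟨h5, h6⟩ := hflip m u h
      subst h6
      exact hu (List.getElem_idxOf (List.idxOf_lt_length_iff.mpr h5)).symm
  · intro u
    have : {m | m < n ∧ σ m u ≠ σ (m+1) u} ⊆ {L.idxOf u} := by
      intro m hm
      exact (hflip m u hm.2).2.symm
    calc recolorCount σ n u ≤ ({L.idxOf u} : Set ℕ).ncard :=
          Set.ncard_le_ncard this (Set.finite_singleton _)
      _ = 1 := Set.ncard_singleton _
end

section
/- Let L be a list assignment of a graph G*, let α and β be two L-colorings of G*, let v be a vertex of G* with |L(v)| ≥ d(v) + 2 where d(v) is the degree of v in G*, and let G** = G* − v. Suppose σ is a recoloring sequence from α restricted to G** to β restricted to G**, and the neighbors of v are recolored a total of t times in σ. Then σ can be extended to a recoloring sequence from α to β in G* that recolors v at most ⌈t / (|L(v)| − d(v) − 1)⌉ + 1 times. -/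
/-- The graph `G − w` (on the same vertex set, with `w` isolated). -/
def deleteVert {V : Type} (G : SimpleGraph V) (w : V) : SimpleGraph V where
  Adj a b := G.Adj a b ∧ a ≠ w ∧ b ≠ w
  symm := by
    constructor
    rintro a b ⟨h, ha, hb⟩
    exact ⟨h.symm, hb, ha⟩
  loopless := by
    constructor
    rintro a ⟨h, -, -⟩
    exact G.loopless.irrefl a h

namespace ExtensionAux

variable {V : Type} [DecidableEq V]

lemma rc_eq_filter {α : Type} [DecidableEq α] (τ : ℕ → V → α) (b : ℕ) (u : V) :
    recolorCount τ b u
      = ((Finset.range b).filter (fun i => ¬ τ i u = τ (i+1) u)).card := by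
  classical
  rw [recolorCount, show {i | i < b ∧ τ i u ≠ τ (i + 1) u}
      = ↑((Finset.range b).filter (fun i => ¬ τ i u = τ (i+1) u)) by ext i; simp,
    Set.ncard_coe_finset]

lemma rc_zero {α : Type} [DecidableEq α] (τ : ℕ → V → α) (u : V) : recolorCount τ 0 u = 0 := by
  classical
  simp [rc_eq_filter]

lemma rc_succ {α : Type} [DecidableEq α] (τ : ℕ → V → α) (a : ℕ) (u : V) :
    recolorCount τ (a+1) u
      = recolorCount τ a u + (if τ a u = τ (a+1) u then 0 else 1) := by
  classical
  rw [rc_eq_filter, rc_eq_filter, Finset.range_add_one, Finset.filter_insert]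
  by_cases h : τ a u = τ (a+1) u
  · simp [h]
  · rw [if_pos h, Finset.card_insert_of_notMem (by simp), if_neg h]

lemma rc_mono {α : Type} [DecidableEq α] (τ : ℕ → V → α) {a b : ℕ} (h : a ≤ b) (u : V) :
    recolorCount τ a u ≤ recolorCount τ b u := by
  classical
  rw [rc_eq_filter, rc_eq_filter]
  exact Finset.card_le_card (Finset.filter_subset_filter _
    (Finset.range_subset_range.2 h))

/-- Colors on the neighborhood `N` at time `i`. -/
def Fset (σ : ℕ → V → ℕ) (N : Finset V) (i : ℕ) : Finset ℕ := N.image (σ i)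

/-- Total number of recolorings of vertices of `N` during the first `i` steps. -/
noncomputable def nsF (σ : ℕ → V → ℕ) (N : Finset V) (i : ℕ) : ℕ :=
  ∑ u ∈ N, recolorCount σ i u

/-- The set of colors to avoid when recoloring `v` just before step `p`. -/
noncomputable def guardSet (σ : ℕ → V → ℕ) (N : Finset V) (n kk p : ℕ) : Finset ℕ :=
  ((Finset.Icc p n).filter (fun j => nsF σ N j ≤ nsF σ N (p+1) + kk)).biUnion
    (Fset σ N)

/-- A greedily chosen new color for `v` at a conflict step `p`. -/
noncomputable def newColor (σ : ℕ → V → ℕ) (N : Finset V) (Lv : Finset ℕ)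
    (n kk p : ℕ) : ℕ :=
  if h : (Lv \ guardSet σ N n kk p).Nonempty then h.choose else 0

/-- The state machine: current color of `v`, number of recolorings of `v` so far,
and the current guard value. -/
noncomputable def triple (σ : ℕ → V → ℕ) (N : Finset V) (Lv : Finset ℕ)
    (n kk a0 : ℕ) : ℕ → ℕ × ℕ × ℕ
  | 0 => (a0, 0, 0)
  | p + 1 =>
    if (triple σ N Lv n kk a0 p).1 ∈ Fset σ N (p+1) then
      (newColor σ N Lv n kk p, (triple σ N Lv n kk a0 p).2.1 + 1,
        nsF σ N (p+1) + kk)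
    else ((triple σ N Lv n kk a0 p).1, (triple σ N Lv n kk a0 p).2.1,
      max (triple σ N Lv n kk a0 p).2.2 (nsF σ N (p+1)))

/-- The list of colorings of the extended sequence. -/
noncomputable def seqL (σ : ℕ → V → ℕ) (v : V) (g : ℕ → ℕ) : ℕ → List (V → ℕ)
  | 0 => [Function.update (σ 0) v (g 0)]
  | i + 1 =>
    seqL σ v g i ++
      (if g (i+1) = g i then [Function.update (σ (i+1)) v (g (i+1))]
       else [Function.update (σ i) v (g (i+1)),
             Function.update (σ (i+1)) v (g (i+1))])


variable {σ : ℕ → V → ℕ} {N : Finset V} {n : ℕ} {v : V}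

lemma ns_zero : nsF σ N 0 = 0 := by
  unfold nsF; simp [rc_zero]

lemma ns_mono {a b : ℕ} (h : a ≤ b) : nsF σ N a ≤ nsF σ N b :=
  Finset.sum_le_sum fun u _ => rc_mono σ h u

lemma step_facts
    (hstep : ∀ i < n, ∃ w, w ≠ v ∧ σ i w ≠ σ (i+1) w ∧
      ∀ u, u ≠ w → σ i u = σ (i + 1) u)
    {p : ℕ} (hp : p < n) :
    (Fset σ N (p+1) = Fset σ N p ∧ nsF σ N (p+1) = nsF σ N p) ∨
    (∃ x, Fset σ N (p+1) ⊆ insert x (Fset σ N p) ∧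
      nsF σ N (p+1) = nsF σ N p + 1) := by
  obtain ⟨w, hwv, hww, hwu⟩ := hstep p hp
  have hsum : nsF σ N (p+1)
      = nsF σ N p + ∑ u ∈ N, (if σ p u = σ (p+1) u then 0 else 1) := by
    unfold nsF
    rw [← Finset.sum_add_distrib]
    exact Finset.sum_congr rfl fun u _ => rc_succ σ p u
  by_cases hw : w ∈ N
  · right
    refine ⟨σ (p+1) w, ?_, ?_⟩
    · intro x hx
      obtain ⟨u, hu, rfl⟩ := Finset.mem_image.1 hx
      by_cases huw : u = w
      · subst huw; exact Finset.mem_insert_self _ _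
      · exact Finset.mem_insert_of_mem
          (Finset.mem_image.2 ⟨u, hu, hwu u huw⟩)
    · rw [hsum, Finset.sum_eq_single_of_mem w hw
        (fun b _ hbw => by rw [if_pos (hwu b hbw)]), if_neg hww]
  · left
    constructor
    · unfold Fset
      exact Finset.image_congr fun u hu => (hwu u (fun h => hw (h ▸ hu))).symm
    · rw [hsum, Finset.sum_eq_zero fun u hu =>
        by rw [if_pos (hwu u (fun h => hw (h ▸ hu)))]]
      exact Nat.add_zero _

lemma ns_step_le
    (hstep : ∀ i < n, ∃ w, w ≠ v ∧ σ i w ≠ σ (i+1) w ∧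
      ∀ u, u ≠ w → σ i u = σ (i + 1) u)
    {p : ℕ} (hp : p < n) : nsF σ N (p+1) ≤ nsF σ N p + 1 := by
  rcases step_facts (N := N) hstep hp with ⟨-, h⟩ | ⟨x, -, h⟩ <;> omega

lemma Fconst
    (hstep : ∀ i < n, ∃ w, w ≠ v ∧ σ i w ≠ σ (i+1) w ∧
      ∀ u, u ≠ w → σ i u = σ (i + 1) u) :
    ∀ a b, a ≤ b → b ≤ n → nsF σ N b ≤ nsF σ N a → Fset σ N b = Fset σ N a := by
  intro a b hab
  induction b, hab using Nat.le_induction with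
  | base => intro _ _; rfl
  | succ b hab ih =>
    intro hbn hns
    have hb : b < n := hbn
    rcases step_facts (N := N) hstep hb with ⟨hF, hns'⟩ | ⟨x, -, hns'⟩
    · rw [hF]
      exact ih (by omega) (by rw [← hns']; exact hns)
    · exact absurd hns (by
        have := ns_mono (σ := σ) (N := N) hab
        omega)

lemma Bcard
    (hstep : ∀ i < n, ∃ w, w ≠ v ∧ σ i w ≠ σ (i+1) w ∧
      ∀ u, u ≠ w → σ i u = σ (i + 1) u) :
    ∀ a b, a ≤ b → b ≤ n →
      ((Finset.Icc a b).biUnion (Fset σ N)).card + nsF σ N a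
        ≤ N.card + nsF σ N b := by
  intro a b hab
  induction b, hab using Nat.le_induction with
  | base =>
    intro _
    rw [Finset.Icc_self, Finset.singleton_biUnion]
    have := Finset.card_image_le (s := N) (f := σ a)
    unfold Fset
    omega
  | succ b hab ih =>
    intro hbn
    have hb : b < n := hbn
    have hIcc : Finset.Icc a (b+1) = insert (b+1) (Finset.Icc a b) := by
      exact (Finset.insert_Icc_right_eq_Icc_add_one (by omega)).symm
    rw [hIcc, Finset.biUnion_insert]
    have ihb := ih (by omega)
    rcases step_facts (N := N) hstep hb with ⟨hF, hns'⟩ | ⟨x, hF, hns'⟩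
    · have hsub : Fset σ N (b+1) ∪ (Finset.Icc a b).biUnion (Fset σ N)
          = (Finset.Icc a b).biUnion (Fset σ N) := by
        apply Finset.union_eq_right.2
        rw [hF]
        exact Finset.subset_biUnion_of_mem _ (Finset.mem_Icc.2 ⟨hab, le_refl b⟩)
      rw [hsub, hns']
      exact ihb
    · have hsub : Fset σ N (b+1) ∪ (Finset.Icc a b).biUnion (Fset σ N)
          ⊆ insert x ((Finset.Icc a b).biUnion (Fset σ N)) := by
        apply Finset.union_subset
        · refine hF.trans (Finset.insert_subset_insert _ ?_)
          exact Finset.subset_biUnion_of_mem _ (Finset.mem_Icc.2 ⟨hab, le_refl b⟩)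
        · exact Finset.subset_insert _ _
      have h1 := Finset.card_le_card hsub
      have h2 := Finset.card_insert_le x ((Finset.Icc a b).biUnion (Fset σ N))
      omega


lemma newColor_spec
    (hstep : ∀ i < n, ∃ w, w ≠ v ∧ σ i w ≠ σ (i+1) w ∧
      ∀ u, u ≠ w → σ i u = σ (i + 1) u)
    {Lv : Finset ℕ} {kk : ℕ} (hLcard : N.card + kk + 2 ≤ Lv.card)
    {p : ℕ} (hp : p < n) :
    newColor σ N Lv n kk p ∈ Lv ∧
    ∀ j, p ≤ j → j ≤ n → nsF σ N j ≤ nsF σ N (p+1) + kk →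
      newColor σ N Lv n kk p ∉ Fset σ N j := by
  set P := (Finset.Icc p n).filter (fun j => nsF σ N j ≤ nsF σ N (p+1) + kk)
    with hP
  have hpP : p ∈ P := Finset.mem_filter.2
    ⟨Finset.mem_Icc.2 ⟨le_refl p, by omega⟩,
      le_trans (ns_mono (Nat.le_succ p)) (Nat.le_add_right _ _)⟩
  have hPne : P.Nonempty := ⟨p, hpP⟩
  set M := P.max' hPne with hM
  have hMP : M ∈ P := P.max'_mem hPne
  have hMn : M ≤ n := (Finset.mem_Icc.1 (Finset.mem_filter.1 hMP).1).2
  have hpM : p ≤ M := Finset.le_max' _ _ hpP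
  have hMbound : nsF σ N M ≤ nsF σ N (p+1) + kk := (Finset.mem_filter.1 hMP).2
  have hsub : P ⊆ Finset.Icc p M := fun j hj => Finset.mem_Icc.2
    ⟨(Finset.mem_Icc.1 (Finset.mem_filter.1 hj).1).1, Finset.le_max' _ _ hj⟩
  have hcard : (guardSet σ N n kk p).card + nsF σ N p ≤ N.card + nsF σ N M := by
    have h1 : guardSet σ N n kk p ⊆ (Finset.Icc p M).biUnion (Fset σ N) :=
      Finset.biUnion_subset_biUnion_of_subset_left _ hsub
    have h2 := Bcard (N := N) hstep p M hpM hMn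
    have h3 := Finset.card_le_card h1
    omega
  have hstep1 := ns_step_le (N := N) hstep hp
  have hne : (Lv \ guardSet σ N n kk p).Nonempty := by
    rw [Finset.nonempty_iff_ne_empty]
    intro h
    have h4 := Finset.card_le_card (Finset.sdiff_eq_empty_iff_subset.1 h)
    omega
  unfold newColor
  rw [dif_pos hne]
  have hmem := Finset.mem_sdiff.1 hne.choose_spec
  refine ⟨hmem.1, fun j hpj hjn hns hF => hmem.2 ?_⟩
  exact Finset.mem_biUnion.2
    ⟨j, Finset.mem_filter.2 ⟨Finset.mem_Icc.2 ⟨hpj, hjn⟩, hns⟩, hF⟩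

lemma inv
    (hstep : ∀ i < n, ∃ w, w ≠ v ∧ σ i w ≠ σ (i+1) w ∧
      ∀ u, u ≠ w → σ i u = σ (i + 1) u)
    {Lv : Finset ℕ} {kk a0 : ℕ} (hLcard : N.card + kk + 2 ≤ Lv.card)
    (ha0L : a0 ∈ Lv) (ha0F : a0 ∉ Fset σ N 0) :
    ∀ p, p ≤ n →
      (triple σ N Lv n kk a0 p).1 ∈ Lv ∧
      (∀ j, p ≤ j → j ≤ n →
        nsF σ N j ≤ (triple σ N Lv n kk a0 p).2.2 →
        (triple σ N Lv n kk a0 p).1 ∉ Fset σ N j) ∧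
      nsF σ N p ≤ (triple σ N Lv n kk a0 p).2.2 ∧
      (triple σ N Lv n kk a0 p).2.2 ≤ nsF σ N p + kk ∧
      (1 ≤ (triple σ N Lv n kk a0 p).2.1 →
        (kk+1) * ((triple σ N Lv n kk a0 p).2.1 - 1) + 1 ≤ nsF σ N p) ∧
      (1 ≤ (triple σ N Lv n kk a0 p).2.1 →
        (kk+1) * (triple σ N Lv n kk a0 p).2.1 ≤ (triple σ N Lv n kk a0 p).2.2) := by
  intro p
  induction p with
  | zero =>
    intro _
    simp only [triple]
    refine ⟨ha0L, ?_, by simp [ns_zero], by simp [ns_zero], by omega, by omega⟩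
    intro j h0j hjn hns
    rw [Fconst hstep 0 j (by omega) hjn (by simpa [ns_zero] using hns)]
    exact ha0F
  | succ p ih =>
    intro hpn
    have hp : p < n := hpn
    obtain ⟨ih1, ih2, ih3, ih4, ih5, ih6⟩ := ih (by omega)
    have hstep1 := ns_step_le (N := N) hstep hp
    have hmono : nsF σ N p ≤ nsF σ N (p+1) := ns_mono (by omega)
    by_cases hc : (triple σ N Lv n kk a0 p).1 ∈ Fset σ N (p+1)
    · -- conflict step
      have hns1 : (triple σ N Lv n kk a0 p).2.2 < nsF σ N (p+1) := by
        by_contra h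
        exact ih2 (p+1) (by omega) (by omega) (by omega) hc
      obtain ⟨hNL, hNF⟩ := newColor_spec hstep hLcard hp
      have hkey : (kk+1) * (triple σ N Lv n kk a0 p).2.1 + 1
          ≤ nsF σ N (p+1) := by
        by_cases hc1 : 1 ≤ (triple σ N Lv n kk a0 p).2.1
        · have := ih6 hc1; omega
        · have h0 : (triple σ N Lv n kk a0 p).2.1 = 0 := by omega
          rw [h0, Nat.mul_zero]; omega
      simp only [triple, if_pos hc]
      refine ⟨hNL, ?_, by omega, by omega, ?_, ?_⟩
      · intro j hj hjn hns
        exact hNF j (by omega) hjn hns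
      · intro _
        simpa only [Nat.add_sub_cancel] using hkey
      · intro _
        have h7 : (kk+1) * ((triple σ N Lv n kk a0 p).2.1 + 1)
            = (kk+1) * (triple σ N Lv n kk a0 p).2.1 + (kk+1) := by ring
        omega
    · -- quiet step
      simp only [triple, if_neg hc]
      refine ⟨ih1, ?_, le_max_right _ _, ?_, ?_, ?_⟩
      · intro j hj hjn hns
        rcases le_or_gt (nsF σ N j) (triple σ N Lv n kk a0 p).2.2 with h | h
        · exact ih2 j (by omega) hjn h
        · have hns' : nsF σ N j ≤ nsF σ N (p+1) := by
            rcases max_cases (triple σ N Lv n kk a0 p).2.2 (nsF σ N (p+1)) with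
              ⟨he, _⟩ | ⟨he, _⟩ <;> omega
          rw [Fconst hstep (p+1) j hj hjn
            (le_antisymm (ns_mono hj) hns' ▸ le_refl _)]
          exact hc
      · exact max_le (by omega) (by omega)
      · intro h1
        exact le_trans (ih5 h1) hmono
      · intro h1
        exact le_trans (ih6 h1) (le_max_left _ _)


lemma branch
    (hstep : ∀ i < n, ∃ w, w ≠ v ∧ σ i w ≠ σ (i+1) w ∧
      ∀ u, u ≠ w → σ i u = σ (i + 1) u)
    {Lv : Finset ℕ} {kk a0 : ℕ} (hLcard : N.card + kk + 2 ≤ Lv.card)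
    {p : ℕ} (hp : p < n) :
    ((triple σ N Lv n kk a0 (p+1)).1 = (triple σ N Lv n kk a0 p).1 ∧
     (triple σ N Lv n kk a0 (p+1)).2.1 = (triple σ N Lv n kk a0 p).2.1) ∨
    ((triple σ N Lv n kk a0 (p+1)).1 ≠ (triple σ N Lv n kk a0 p).1 ∧
     (triple σ N Lv n kk a0 (p+1)).2.1 = (triple σ N Lv n kk a0 p).2.1 + 1 ∧
     (triple σ N Lv n kk a0 (p+1)).1 ∈ Lv ∧
     (triple σ N Lv n kk a0 (p+1)).1 ∉ Fset σ N p ∧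
     (triple σ N Lv n kk a0 (p+1)).1 ∉ Fset σ N (p+1)) := by
  by_cases hc : (triple σ N Lv n kk a0 p).1 ∈ Fset σ N (p+1)
  · right
    obtain ⟨hNL, hNF⟩ := newColor_spec (N := N) hstep hLcard hp
    have hFp : newColor σ N Lv n kk p ∉ Fset σ N p :=
      hNF p (le_refl p) (by omega)
        (le_trans (ns_mono (Nat.le_succ p)) (Nat.le_add_right _ _))
    have hFp1 : newColor σ N Lv n kk p ∉ Fset σ N (p+1) :=
      hNF (p+1) (by omega) (by omega) (Nat.le_add_right _ _)
    simp only [triple, if_pos hc]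
    exact ⟨fun h => hFp1 (h ▸ hc), by trivial, hNL, hFp, hFp1⟩
  · left
    simp only [triple, if_neg hc]
    exact ⟨by trivial, by trivial⟩

lemma seq_prefix (g : ℕ → ℕ) : ∀ i j, i ≤ j → seqL σ v g i <+: seqL σ v g j := by
  intro i j hij
  induction j, hij using Nat.le_induction with
  | base => exact List.prefix_refl _
  | succ j hij ih => exact ih.trans (List.prefix_append _ _)

lemma getD_prefix {l1 l2 : List (V → ℕ)} (h : l1 <+: l2) {a : ℕ}
    (ha : a < l1.length) (d : V → ℕ) : l2.getD a d = l1.getD a d := by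
  obtain ⟨t, rfl⟩ := h
  exact List.getD_append _ _ _ _ ha

lemma seq_len (g c : ℕ → ℕ) (hc0 : c 0 = 0)
    (hgc : ∀ p < n, (g (p+1) = g p ∧ c (p+1) = c p) ∨
      (g (p+1) ≠ g p ∧ c (p+1) = c p + 1)) :
    ∀ i ≤ n, (seqL σ v g i).length = i + 1 + c i := by
  intro i
  induction i with
  | zero => intro _; simp [seqL, hc0]
  | succ i ih =>
    intro hin
    have h1 := ih (by omega)
    rcases hgc i hin with ⟨hg, hc⟩ | ⟨hg, hc⟩
    · simp only [seqL, if_pos hg, List.length_append, h1, List.length_singleton]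
      omega
    · simp only [seqL, if_neg hg, List.length_append, h1]
      simp [hc]
      omega

lemma seq_last (g c : ℕ → ℕ) (hc0 : c 0 = 0)
    (hgc : ∀ p < n, (g (p+1) = g p ∧ c (p+1) = c p) ∨
      (g (p+1) ≠ g p ∧ c (p+1) = c p + 1)) (d : V → ℕ) :
    ∀ i ≤ n, (seqL σ v g i).getD (i + c i) d = Function.update (σ i) v (g i) := by
  intro i
  induction i with
  | zero => intro _; simp [seqL, hc0]
  | succ i ih =>
    intro hin
    have hlen := seq_len (σ := σ) (v := v) g c hc0 hgc i (by omega)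
    rcases hgc i hin with ⟨hg, hc⟩ | ⟨hg, hc⟩
    · simp only [seqL, if_pos hg]
      rw [List.getD_append_right _ _ _ _ (by omega), hlen]
      have : i + 1 + c (i+1) - (i + 1 + c i) = 0 := by omega
      rw [this]
      rfl
    · simp only [seqL, if_neg hg]
      rw [List.getD_append_right _ _ _ _ (by omega), hlen]
      have : i + 1 + c (i+1) - (i + 1 + c i) = 1 := by omega
      rw [this]
      rfl

lemma seq_mem (g : ℕ → ℕ) : ∀ i, ∀ x ∈ seqL σ v g i,
    (∃ j ≤ i, x = Function.update (σ j) v (g j)) ∨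
    (∃ j < i, g (j+1) ≠ g j ∧ x = Function.update (σ j) v (g (j+1))) := by
  intro i
  induction i with
  | zero =>
    intro x hx
    simp only [seqL, List.mem_singleton] at hx
    exact Or.inl ⟨0, le_refl 0, hx⟩
  | succ i ih =>
    intro x hx
    rcases List.mem_append.1 hx with h | h
    · rcases ih x h with ⟨j, hj, hx⟩ | ⟨j, hj, hx⟩
      · exact Or.inl ⟨j, by omega, hx⟩
      · exact Or.inr ⟨j, by omega, hx⟩
    · by_cases hg : g (i+1) = g i
      · rw [if_pos hg, List.mem_singleton] at h
        exact Or.inl ⟨i+1, le_refl _, h⟩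
      · rw [if_neg hg, List.mem_cons, List.mem_singleton] at h
        rcases h with h | h
        · exact Or.inr ⟨i, by omega, hg, h⟩
        · exact Or.inl ⟨i+1, le_refl _, h⟩

lemma pos_decomp (f : ℕ → ℕ) :
    ∀ (b : ℕ) (j : ℕ), f 0 ≤ j → j < f b → ∃ i < b, f i ≤ j ∧ j < f (i+1) := by
  intro b
  induction b with
  | zero => intro j h1 h2; omega
  | succ b ih =>
    intro j h1 h2
    by_cases h3 : j < f b
    · obtain ⟨i, hi, h4⟩ := ih j h1 h3
      exact ⟨i, by omega, h4⟩
    · exact ⟨b, by omega, by omega, h2⟩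

end ExtensionAux

open ExtensionAux in
/-- the extension lemma. Given `L`-colorings `α, β` of `G*`, a vertex `v`
with `|L(v)| ≥ d(v) + 2`, and a recoloring sequence `σ` of `G** = G* − v` from
`α|G**` to `β|G**` recoloring the neighbors of `v` a total of `t` times, `σ` extends
to a recoloring sequence of `G*` from `α` to `β` recoloring every vertex `u ≠ v`
exactly as often as `σ` does, and recoloring `v` at most
`⌈t / (|L(v)| − d(v) − 1)⌉ + 1` times. -/
theorem extension_lemma {V : Type} [Fintype V] [DecidableEq V]
    (G : SimpleGraph V) [DecidableRel G.Adj]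
    (L : V → Finset ℕ) (v : V) (hL : G.degree v + 2 ≤ (L v).card)
    (α β : V → ℕ)
    (hα : Proper G α ∧ ∀ u, α u ∈ L u) (hβ : Proper G β ∧ ∀ u, β u ∈ L u)
    (n : ℕ) (σ : ℕ → V → ℕ)
    (hσ0 : ∀ u, u ≠ v → σ 0 u = α u) (hσn : ∀ u, u ≠ v → σ n u = β u)
    (hσcol : ∀ i ≤ n, Proper (deleteVert G v) (σ i) ∧ ∀ u, u ≠ v → σ i u ∈ L u)
    (hstep : ∀ i < n, ∃ w, w ≠ v ∧ σ i w ≠ σ (i + 1) w ∧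
      ∀ u, u ≠ w → σ i u = σ (i + 1) u) :
    ∃ (m : ℕ) (σ' : ℕ → V → ℕ),
      σ' 0 = α ∧ σ' m = β ∧
      (∀ i ≤ m, Proper G (σ' i) ∧ ∀ u, σ' i u ∈ L u) ∧
      (∀ i < m, ∃ w, σ' i w ≠ σ' (i + 1) w ∧ ∀ u, u ≠ w → σ' i u = σ' (i + 1) u) ∧
      (∀ u, u ≠ v → recolorCount σ' m u = recolorCount σ n u) ∧
      recolorCount σ' m v ≤
        ((∑ u ∈ G.neighborFinset v, recolorCount σ n u) +
            ((L v).card - G.degree v - 1) - 1) /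
          ((L v).card - G.degree v - 1) + 1 := by
  classical
  obtain ⟨hαP, hαL⟩ := hα
  obtain ⟨hβP, hβL⟩ := hβ
  set N := G.neighborFinset v with hN
  have hdeg : G.degree v = N.card := rfl
  set kk := (L v).card - G.degree v - 2 with hkk
  have hLcard : N.card + kk + 2 ≤ (L v).card := by omega
  have hvN : v ∉ N := G.notMem_neighborFinset_self v
  have hmemN : ∀ u, u ∈ N ↔ G.Adj v u := fun u => SimpleGraph.mem_neighborFinset G v u
  have ha0F : α v ∉ Fset σ N 0 := by
    intro h
    obtain ⟨u, hu, hux⟩ := Finset.mem_image.1 h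
    have huv : u ≠ v := fun h' => hvN (h' ▸ hu)
    rw [hσ0 u huv] at hux
    exact hαP ((hmemN u).1 hu) hux.symm
  set g : ℕ → ℕ := fun p => (triple σ N (L v) n kk (α v) p).1 with hg
  set c : ℕ → ℕ := fun p => (triple σ N (L v) n kk (α v) p).2.1 with hc
  have hc0 : c 0 = 0 := rfl
  have hg0 : g 0 = α v := rfl
  have hInv := inv (N := N) hstep hLcard (hαL v) ha0F
  have hBr : ∀ p < n, (g (p+1) = g p ∧ c (p+1) = c p) ∨
      (g (p+1) ≠ g p ∧ c (p+1) = c p + 1 ∧ g (p+1) ∈ L v ∧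
        g (p+1) ∉ Fset σ N p ∧ g (p+1) ∉ Fset σ N (p+1)) :=
    fun p hp => branch hstep hLcard hp
  have hgc : ∀ p < n, (g (p+1) = g p ∧ c (p+1) = c p) ∨
      (g (p+1) ≠ g p ∧ c (p+1) = c p + 1) := by
    intro p hp
    rcases hBr p hp with ⟨h1, h2⟩ | ⟨h1, h2, -⟩
    exacts [Or.inl ⟨h1, h2⟩, Or.inr ⟨h1, h2⟩]
  have hgL : ∀ p ≤ n, g p ∈ L v := fun p hp => (hInv p hp).1
  have hgF : ∀ p ≤ n, g p ∉ Fset σ N p :=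
    fun p hp => (hInv p hp).2.1 p (le_refl p) hp (hInv p hp).2.2.1
  set SL := seqL σ v g n with hSL
  set Lfull := SL ++ (if g n = β v then [] else [β]) with hLf
  set m := n + c n + (if g n = β v then 0 else 1) with hm
  set σ' : ℕ → V → ℕ := fun j => Lfull.getD j β with hσ'
  have hlen : SL.length = n + 1 + c n := seq_len g c hc0 hgc n (le_refl n)
  have hLflen : Lfull.length = m + 1 := by
    rw [hLf, List.length_append, hlen, hm]
    by_cases h : g n = β v <;> simp [h] <;> omega
  have hpre : ∀ i ≤ n, seqL σ v g i <+: Lfull := fun i hi =>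
    (seq_prefix g i n hi).trans (List.prefix_append _ _)
  have hSi : ∀ i ≤ n, σ' (i + c i) = Function.update (σ i) v (g i) := by
    intro i hi
    have hl := seq_len (σ := σ) (v := v) g c hc0 hgc i hi
    rw [hσ']
    show Lfull.getD (i + c i) β = _
    rw [getD_prefix (hpre i hi) (by omega) β]
    exact seq_last g c hc0 hgc β i hi
  have hTi : ∀ i < n, g (i+1) ≠ g i →
      σ' (i + c i + 1) = Function.update (σ i) v (g (i+1)) := by
    intro i hi hg1
    have hl := seq_len (σ := σ) (v := v) g c hc0 hgc i (by omega)
    have hl1 := seq_len (σ := σ) (v := v) g c hc0 hgc (i+1) hi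
    have hcc : c (i+1) = c i + 1 := by
      rcases hgc i hi with ⟨h1, -⟩ | ⟨-, h2⟩
      · exact absurd h1 hg1
      · exact h2
    rw [hσ']
    show Lfull.getD (i + c i + 1) β = _
    rw [getD_prefix (hpre (i+1) hi) (by omega) β]
    show (seqL σ v g (i+1)).getD (i + c i + 1) β = _
    simp only [seqL, if_neg hg1]
    rw [List.getD_append_right _ _ _ _ (by omega), hl]
    have he : i + c i + 1 - (i + 1 + c i) = 0 := by omega
    rw [he]
    rfl
  have hupd : ∀ i ≤ n, ∀ cc, cc ∉ Fset σ N i → cc ∈ L v →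
      Proper G (Function.update (σ i) v cc) ∧
        ∀ u, Function.update (σ i) v cc u ∈ L u := by
    intro i hi cc hccF hccL
    obtain ⟨hprop, hmem⟩ := hσcol i hi
    constructor
    · intro a b hab
      by_cases hav : a = v
      · have hbv : b ≠ v := by
          intro h
          rw [hav, h] at hab
          exact G.loopless.irrefl v hab
        rw [hav, Function.update_self, Function.update_of_ne hbv]
        intro h
        refine hccF (Finset.mem_image.2 ⟨b, (hmemN b).2 ?_, h.symm⟩)
        rw [← hav]
        exact hab
      · by_cases hbv : b = v
        · rw [hbv, Function.update_of_ne hav, Function.update_self]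
          intro h
          refine hccF (Finset.mem_image.2 ⟨a, (hmemN a).2 ?_, h⟩)
          rw [← hbv]
          exact hab.symm
        · rw [Function.update_of_ne hav, Function.update_of_ne hbv]
          exact hprop ⟨hab, hav, hbv⟩
    · intro u
      by_cases huv : u = v
      · subst huv
        rw [Function.update_self]
        exact hccL
      · rw [Function.update_of_ne huv]
        exact hmem u huv
  have hgood : ∀ x ∈ Lfull, Proper G x ∧ ∀ u, x u ∈ L u := by
    intro x hx
    rcases List.mem_append.1 hx with hx | hx
    · rcases seq_mem g n x hx with ⟨j, hj, rfl⟩ | ⟨j, hj, hgj, rfl⟩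
      · exact hupd j hj (g j) (hgF j hj) (hgL j hj)
      · rcases hBr j hj with ⟨h1, -⟩ | ⟨-, -, h3, h4, -⟩
        · exact absurd h1 hgj
        · exact hupd j (by omega) (g (j+1)) h4 h3
    · have hxβ : x = β := by
        by_cases h : g n = β v
        · rw [if_pos h] at hx
          simp at hx
        · rw [if_neg h] at hx
          simpa using hx
      rw [hxβ]
      exact ⟨hβP, hβL⟩
  have hS0 : σ' 0 = α := by
    have h0 := hSi 0 (Nat.zero_le n)
    rw [show (0 : ℕ) + c 0 = 0 by omega] at h0
    rw [h0]
    funext u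
    by_cases huv : u = v
    · subst huv
      rw [Function.update_self, hg0]
    · rw [Function.update_of_ne huv]
      exact hσ0 u huv
  have hSn' : σ' (n + c n) = Function.update (σ n) v (g n) := hSi n (le_refl n)
  have hSm : σ' m = β := by
    by_cases h : g n = β v
    · rw [hm, if_pos h]
      simp only [Nat.add_zero]
      rw [hSn']
      funext u
      by_cases huv : u = v
      · subst huv
        rw [Function.update_self, h]
      · rw [Function.update_of_ne huv]
        exact hσn u huv
    · rw [hm, if_neg h]
      rw [hσ']
      show Lfull.getD (n + c n + 1) β = β
      rw [hLf, List.getD_append_right _ _ _ _ (by omega)]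
      rw [if_neg h, hlen]
      have he : n + c n + 1 - (n + 1 + c n) = 0 := by omega
      rw [he]
      rfl
  have hstep' : ∀ i < m, ∃ w, σ' i w ≠ σ' (i+1) w ∧
      ∀ u, u ≠ w → σ' i u = σ' (i+1) u := by
    intro j hj
    by_cases hjn : j < n + c n
    · obtain ⟨i, hi, h1, h2⟩ := pos_decomp (fun i => i + c i) n j
        (by show 0 + c 0 ≤ j; omega) hjn
      replace h1 : i + c i ≤ j := h1
      replace h2 : j < (i + 1) + c (i + 1) := h2
      rcases hBr i hi with ⟨hgEq, hcEq⟩ | ⟨hgNe, hcEq, -⟩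
      · have hj_eq : j = i + c i := by omega
        obtain ⟨w, hwv, hww, hwu⟩ := hstep i hi
        have e1 := hSi i (le_of_lt hi)
        have e2 : σ' (i + c i + 1) = Function.update (σ (i+1)) v (g (i+1)) := by
          have h3 := hSi (i+1) hi
          rw [show (i+1) + c (i+1) = i + c i + 1 by omega] at h3
          exact h3
        rw [hj_eq]
        refine ⟨w, ?_, ?_⟩
        · rw [e1, e2, Function.update_of_ne hwv, Function.update_of_ne hwv]
          exact hww
        · intro u huw
          rw [e1, e2]
          by_cases huv : u = v
          · subst huv
            rw [Function.update_self, Function.update_self, hgEq]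
          · rw [Function.update_of_ne huv, Function.update_of_ne huv]
            exact hwu u huw
      · have e1 := hSi i (le_of_lt hi)
        have e2 := hTi i hi hgNe
        rcases (by omega : j = i + c i ∨ j = i + c i + 1) with hj_eq | hj_eq
        · rw [hj_eq]
          refine ⟨v, ?_, ?_⟩
          · rw [e1, e2, Function.update_self, Function.update_self]
            exact fun h => hgNe h.symm
          · intro u huv
            rw [e1, e2, Function.update_of_ne huv, Function.update_of_ne huv]
        · obtain ⟨w, hwv, hww, hwu⟩ := hstep i hi
          have e3 : σ' (i + c i + 2) = Function.update (σ (i+1)) v (g (i+1)) := by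
            have h3 := hSi (i+1) hi
            rw [show (i+1) + c (i+1) = i + c i + 2 by omega] at h3
            exact h3
          rw [hj_eq]
          refine ⟨w, ?_, ?_⟩
          · rw [e2, show i + c i + 1 + 1 = i + c i + 2 by omega, e3,
              Function.update_of_ne hwv, Function.update_of_ne hwv]
            exact hww
          · intro u huw
            rw [e2, show i + c i + 1 + 1 = i + c i + 2 by omega, e3]
            by_cases huv : u = v
            · subst huv
              rw [Function.update_self, Function.update_self]
            · rw [Function.update_of_ne huv, Function.update_of_ne huv]
              exact hwu u huw
    · have hgb : ¬ g n = β v := by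
        intro h
        rw [hm, if_pos h] at hj
        omega
      have hj_eq : j = n + c n := by
        rw [hm, if_neg hgb] at hj
        omega
      have hmeq : m = n + c n + 1 := by
        rw [hm, if_neg hgb]
      refine ⟨v, ?_, ?_⟩
      · rw [hj_eq, hSn', show n + c n + 1 = m by omega, hSm, Function.update_self]
        exact hgb
      · intro u huv
        rw [hj_eq, hSn', show n + c n + 1 = m by omega, hSm,
          Function.update_of_ne huv]
        exact hσn u huv
  have hcnt : ∀ i ≤ n,
      (∀ u, u ≠ v → recolorCount σ' (i + c i) u = recolorCount σ i u) ∧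
      recolorCount σ' (i + c i) v = c i := by
    intro i
    induction i with
    | zero =>
      intro _
      rw [show 0 + c 0 = 0 by omega]
      exact ⟨fun u _ => by rw [rc_zero, rc_zero], by rw [rc_zero, hc0]⟩
    | succ i ih =>
      intro hin
      obtain ⟨ih1, ih2⟩ := ih (by omega)
      obtain ⟨w, hwv, hww, hwu⟩ := hstep i hin
      have e1 := hSi i (le_of_lt hin)
      rcases hBr i hin with ⟨hgEq, hcEq⟩ | ⟨hgNe, hcEq, -⟩
      · have hpos : (i+1) + c (i+1) = (i + c i) + 1 := by omega
        have e2 : σ' ((i + c i) + 1) = Function.update (σ (i+1)) v (g (i+1)) := by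
          rw [← hpos]
          exact hSi (i+1) hin
        constructor
        · intro u huv
          rw [hpos, rc_succ σ' (i + c i) u, ih1 u huv, rc_succ σ i u, e1, e2,
            Function.update_of_ne huv, Function.update_of_ne huv]
        · rw [hpos, rc_succ σ' (i + c i) v, ih2, e1, e2, Function.update_self,
            Function.update_self, if_pos hgEq.symm, hcEq]
          omega
      · have hpos : (i+1) + c (i+1) = (i + c i) + 2 := by omega
        have e2 := hTi i hin hgNe
        have e3 : σ' (i + c i + 2) = Function.update (σ (i+1)) v (g (i+1)) := by
          rw [← hpos]
          exact hSi (i+1) hin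
        constructor
        · intro u huv
          rw [hpos, show (i + c i) + 2 = (i + c i + 1) + 1 by omega,
            rc_succ σ' (i + c i + 1) u, rc_succ σ' (i + c i) u, ih1 u huv,
            rc_succ σ i u, e1, e2, e3, Function.update_of_ne huv,
            Function.update_of_ne huv, Function.update_of_ne huv]
          rw [if_pos rfl]
          omega
        · rw [hpos, show (i + c i) + 2 = (i + c i + 1) + 1 by omega,
            rc_succ σ' (i + c i + 1) v, rc_succ σ' (i + c i) v, ih2, e1, e2, e3,
            Function.update_self, Function.update_self, Function.update_self,
            if_neg (fun h => hgNe h.symm), if_pos rfl, hcEq]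
  have hKv : (L v).card - G.degree v - 1 = kk + 1 := by omega
  refine ⟨m, σ', hS0, hSm, ?_, hstep', ?_, ?_⟩
  · intro i him
    have hilt : i < Lfull.length := by omega
    have hmm : σ' i ∈ Lfull := by
      rw [hσ']
      show Lfull.getD i β ∈ Lfull
      rw [List.getD_eq_getElem _ _ hilt]
      exact List.getElem_mem _
    exact hgood _ hmm
  · intro u huv
    by_cases h : g n = β v
    · rw [show m = n + c n by simp [hm, h]]
      exact (hcnt n (le_refl n)).1 u huv
    · rw [show m = n + c n + 1 by simp [hm, h], rc_succ σ' (n + c n) u,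
        (hcnt n (le_refl n)).1 u huv, hSn',
        show n + c n + 1 = m by rw [hm, if_neg h], hSm,
        Function.update_of_ne huv, if_pos (hσn u huv)]
      omega
  · have ht : ∑ u ∈ N, recolorCount σ n u = nsF σ N n := rfl
    rw [ht, hKv]
    have hcnb : c n ≤ (nsF σ N n + kk) / (kk + 1) := by
      by_cases hcn : 1 ≤ c n
      · have h5 : (kk + 1) * (c n - 1) + 1 ≤ nsF σ N n :=
          (hInv n (le_refl n)).2.2.2.2.1 hcn
        have h6 : (c n - 1) * (kk + 1) ≤ nsF σ N n - 1 := by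
          have hcm := Nat.mul_comm (kk + 1) (c n - 1)
          omega
        have h7 : c n - 1 ≤ (nsF σ N n - 1) / (kk + 1) :=
          (Nat.le_div_iff_mul_le (by omega)).2 h6
        have h8 : (nsF σ N n - 1) / (kk + 1) + 1
            = (nsF σ N n + kk) / (kk + 1) := by
          rw [← Nat.add_div_right (nsF σ N n - 1) (by omega : 0 < kk + 1)]
          congr 1
          omega
        omega
      · have hc0' : c n = 0 := by omega
        rw [hc0']
        exact Nat.zero_le _
    have hrc : recolorCount σ' m v ≤ c n + 1 := by
      by_cases h : g n = β v
      · rw [show m = n + c n by simp [hm, h], (hcnt n (le_refl n)).2]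
        omega
      · rw [show m = n + c n + 1 by simp [hm, h], rc_succ σ' (n + c n) v,
          (hcnt n (le_refl n)).2]
        split <;> omega
    have h9 : nsF σ N n + (kk + 1) - 1 = nsF σ N n + kk := by omega
    rw [h9]
    omega
end

section
/- Let G be a d-degenerate graph and L a list assignment of G with |L(v)| ≥ 2d + 2 for every vertex v. If c is a positive integer satisfying ⌈dc/(d+1)⌉ + 1 ≤ c, then for any two L-colorings α and β of G there is a recoloring sequence from α to β recoloring each vertex at most c times; in particular the diameter of the L-recoloring graph of G is at most c·|V(G)|. -/
/-- An `L`-coloring of `G`: a proper coloring respecting the lists `L`. -/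
def IsLColoring {V : Type} (G : SimpleGraph V) (L : V → Finset ℕ) (c : V → ℕ) : Prop :=
  Proper G c ∧ ∀ v, c v ∈ L v

/-- A recoloring sequence of `L`-colorings from `α` to `β` with `n` single-vertex
recoloring steps. -/
def RecolorSeq {V : Type} (G : SimpleGraph V) (L : V → Finset ℕ) (α β : V → ℕ)
    (n : ℕ) (σ : ℕ → V → ℕ) : Prop :=
  σ 0 = α ∧ σ n = β ∧ (∀ i ≤ n, IsLColoring G L (σ i)) ∧
  ∀ i < n, ∃ v, σ i v ≠ σ (i + 1) v ∧ ∀ u, u ≠ v → σ i u = σ (i + 1) u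

/-- `G` is `d`-degenerate: every nonempty (induced) subgraph has a vertex of
degree at most `d` in it. -/
def Degenerate {V : Type} (G : SimpleGraph V) (d : ℕ) : Prop :=
  ∀ s : Set V, s.Nonempty → ∃ v ∈ s, ((G.neighborSet v) ∩ s).ncard ≤ d

namespace Recol

variable {V : Type} [DecidableEq V]

/-- Apply one recoloring move. -/
def rstep (γ : V → ℕ) (m : V × ℕ) : V → ℕ := Function.update γ m.1 m.2

/-- Apply a list of moves. -/
def play (γ : V → ℕ) (ms : List (V × ℕ)) : V → ℕ := ms.foldl rstep γ

@[simp] lemma play_nil (γ : V → ℕ) : play γ [] = γ := rfl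
@[simp] lemma play_cons (γ : V → ℕ) (m ms) : play γ (m :: ms) = play (rstep γ m) ms := rfl
lemma play_append (γ : V → ℕ) (ms₁ ms₂) :
    play γ (ms₁ ++ ms₂) = play (play γ ms₁) ms₂ := List.foldl_append ..

lemma rstep_apply_ne (γ : V → ℕ) (m : V × ℕ) {u : V} (h : u ≠ m.1) : rstep γ m u = γ u :=
  Function.update_of_ne h _ _

@[simp] lemma rstep_apply_self (γ : V → ℕ) (m : V × ℕ) : rstep γ m m.1 = m.2 :=
  Function.update_self _ _ _

/-- A valid sequence of single-vertex recolorings inside `s`, starting from `γ`. -/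
inductive ValidSeq (G : SimpleGraph V) (L : V → Finset ℕ) (s : Finset V) :
    (V → ℕ) → List (V × ℕ) → Prop
  | nil (γ) : ValidSeq G L s γ []
  | cons {γ : V → ℕ} {m : V × ℕ} {ms : List (V × ℕ)}
      (h1 : m.1 ∈ s) (h2 : m.2 ∈ L m.1) (h3 : m.2 ≠ γ m.1)
      (h4 : ∀ u ∈ s, G.Adj m.1 u → m.2 ≠ γ u)
      (h5 : ValidSeq G L s (rstep γ m) ms) : ValidSeq G L s γ (m :: ms)

variable {G : SimpleGraph V} {L : V → Finset ℕ} {s : Finset V}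

lemma ValidSeq.append {γ ms₁ ms₂} (h1 : ValidSeq G L s γ ms₁)
    (h2 : ValidSeq G L s (play γ ms₁) ms₂) : ValidSeq G L s γ (ms₁ ++ ms₂) := by
  induction h1 with
  | nil => exact h2
  | cons a b c d e ih => exact ValidSeq.cons a b c d (ih (by simpa using h2))

lemma ValidSeq.congr {γ δ : V → ℕ} {ms} (h : ValidSeq G L s γ ms)
    (hagree : ∀ u ∈ s, γ u = δ u) : ValidSeq G L s δ ms := by
  induction h generalizing δ with
  | nil => exact ValidSeq.nil δ
  | @cons γ m ms h1 h2 h3 h4 h5 ih =>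
      refine ValidSeq.cons h1 h2 (by rw [← hagree _ h1]; exact h3)
        (fun u hu hadj => by rw [← hagree u hu]; exact h4 u hu hadj) (ih ?_)
      intro u hu
      by_cases hm : u = m.1
      · subst hm; simp [rstep]
      · rw [rstep_apply_ne _ _ hm, rstep_apply_ne _ _ hm]; exact hagree u hu

end Recol

namespace Recol
variable {V : Type} [DecidableEq V] {G : SimpleGraph V} {L : V → Finset ℕ} {s : Finset V}

/-- An `L`-coloring of the subgraph induced on `s`. -/
def IsColOn (G : SimpleGraph V) (L : V → Finset ℕ) (s : Finset V) (γ : V → ℕ) : Prop :=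
  (∀ a ∈ s, ∀ b ∈ s, G.Adj a b → γ a ≠ γ b) ∧ (∀ u ∈ s, γ u ∈ L u)

lemma ValidSeq.take {γ ms} (h : ValidSeq G L s γ ms) (i : ℕ) :
    ValidSeq G L s γ (ms.take i) := by
  induction h generalizing i with
  | nil => simp only [List.take_nil]; exact ValidSeq.nil _
  | @cons γ m ms h1 h2 h3 h4 h5 ih =>
      cases i with
      | zero => exact ValidSeq.nil γ
      | succ i => exact ValidSeq.cons h1 h2 h3 h4 (ih i)

lemma ValidSeq.drop_play {γ ms} (h : ValidSeq G L s γ ms) (i : ℕ) :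
    ValidSeq G L s (play γ (ms.take i)) (ms.drop i) := by
  induction h generalizing i with
  | nil => simpa using ValidSeq.nil _
  | @cons γ m ms h1 h2 h3 h4 h5 ih =>
      cases i with
      | zero => exact ValidSeq.cons h1 h2 h3 h4 h5
      | succ i => simpa using ih i

lemma IsColOn.step {γ : V → ℕ} {m : V × ℕ} (hγ : IsColOn G L s γ) (h1 : m.1 ∈ s)
    (h2 : m.2 ∈ L m.1) (h4 : ∀ u ∈ s, G.Adj m.1 u → m.2 ≠ γ u) :
    IsColOn G L s (rstep γ m) := by
  obtain ⟨hp, hl⟩ := hγ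
  constructor
  · intro a ha b hb hadj
    by_cases ham : a = m.1
    · subst ham
      have hbm : b ≠ m.1 := fun h => G.irrefl (h ▸ hadj)
      rw [rstep_apply_self, rstep_apply_ne _ _ hbm]
      exact h4 b hb hadj
    · rw [rstep_apply_ne _ _ ham]
      by_cases hbm : b = m.1
      · subst hbm
        rw [rstep_apply_self]
        exact fun h => h4 a ha (G.adj_symm hadj) h.symm
      · rw [rstep_apply_ne _ _ hbm]; exact hp a ha b hb hadj
  · intro u hu
    by_cases hum : u = m.1
    · subst hum; rw [rstep_apply_self]; exact h2
    · rw [rstep_apply_ne _ _ hum]; exact hl u hu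

lemma IsColOn.play {γ ms} (hγ : IsColOn G L s γ) (h : ValidSeq G L s γ ms) :
    IsColOn G L s (play γ ms) := by
  induction h with
  | nil => exact hγ
  | cons h1 h2 h3 h4 h5 ih => exact ih (hγ.step h1 h2 h4)

/-- Total number of moves equals sum over vertices of per-vertex counts. -/
lemma length_eq_sum_countP [Fintype V] (ms : List (V × ℕ)) :
    ms.length = ∑ u : V, ms.countP (fun m => m.1 = u) := by
  induction ms with
  | nil => simp
  | cons m ms ih =>
      simp only [List.length_cons, List.countP_cons, ih, Finset.sum_add_distrib]
      congr 1
      rw [Finset.sum_eq_single m.1] <;> simp +contextual [eq_comm]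

end Recol

namespace Recol
variable {V : Type} [DecidableEq V]

section Build

variable (L : V → Finset ℕ) (v : V) (N : Finset V) (k : ℕ)

/-- Colors of upcoming moves at neighbors of `v`. -/
def ncolors (ms : List (V × ℕ)) : List ℕ := (ms.filter (fun m => m.1 ∈ N)).map Prod.snd

lemma ncolors_cons (m : V × ℕ) (ms : List (V × ℕ)) :
    ncolors N (m :: ms) = if m.1 ∈ N then m.2 :: ncolors N ms else ncolors N ms := by
  by_cases h : m.1 ∈ N <;> simp [ncolors, h]

/-- Colors `v` must avoid: current colors of its neighbors and the next `k`
upcoming colors at its neighbors. -/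
def avoid (γ : V → ℕ) (ms : List (V × ℕ)) : Finset ℕ :=
  N.image γ ∪ ((ncolors N ms).take k).toFinset

lemma card_avoid (γ : V → ℕ) (ms : List (V × ℕ)) : (avoid N k γ ms).card ≤ N.card + k :=
  le_trans (Finset.card_union_le _ _) (add_le_add Finset.card_image_le
    (le_trans (List.toFinset_card_le _) (by simpa using List.length_take_le k _)))

/-- A fresh color for `v`. -/
noncomputable def pick (γ : V → ℕ) (ms : List (V × ℕ)) : ℕ :=
  if h : (L v \ avoid N k γ ms).Nonempty then h.choose else 0

lemma pick_spec (hcard : N.card + k < (L v).card) (γ : V → ℕ) (ms : List (V × ℕ)) :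
    pick L v N k γ ms ∈ L v ∧ pick L v N k γ ms ∉ avoid N k γ ms := by
  have hne : (L v \ avoid N k γ ms).Nonempty := by
    rw [← Finset.card_pos]
    have := Finset.le_card_sdiff (avoid N k γ ms) (L v)
    have := card_avoid N k γ ms
    omega
  rw [pick, dif_pos hne]
  simpa [Finset.mem_sdiff] using hne.choose_spec

/-- Interleave recolorings of `v` into a move sequence avoiding `v`. -/
noncomputable def build : (V → ℕ) → List (V × ℕ) → List (V × ℕ)
  | _, [] => []
  | γ, m :: ms =>
    if m.1 ∈ N ∧ m.2 = γ v then
      (v, pick L v N k γ (m :: ms)) :: m ::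
        build (rstep (rstep γ (v, pick L v N k γ (m :: ms))) m) ms
    else m :: build (rstep γ m) ms

/-- `build` has the same effect as the original sequence away from `v`. -/
lemma play_build (ms : List (V × ℕ)) : ∀ (γ δ : V → ℕ), (∀ u, u ≠ v → γ u = δ u) →
    ∀ u, u ≠ v → play γ (build L v N k γ ms) u = play δ ms u := by
  induction ms with
  | nil => intro γ δ hag u hu; rw [build]; simpa using hag u hu
  | cons m ms ih =>
      intro γ δ hag u hu
      rw [build]
      split
      · rw [play_cons, play_cons, play_cons]
        refine ih _ _ ?_ u hu
        intro w hw
        by_cases hwm : w = m.1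
        · subst hwm; simp
        · rw [rstep_apply_ne _ _ hwm, rstep_apply_ne _ _ hwm,
            rstep_apply_ne _ _ (show w ≠ (v, _).1 from hw), hag w hw]
      · rw [play_cons, play_cons]
        refine ih _ _ ?_ u hu
        intro w hw
        by_cases hwm : w = m.1
        · subst hwm; simp
        · rw [rstep_apply_ne _ _ hwm, rstep_apply_ne _ _ hwm, hag w hw]

lemma build_countP_ne (u : V) (hu : u ≠ v) (ms : List (V × ℕ)) : ∀ γ : V → ℕ,
    (build L v N k γ ms).countP (fun m => m.1 = u) = ms.countP (fun m => m.1 = u) := by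
  induction ms with
  | nil => intro γ; rw [build]
  | cons m ms ih =>
      intro γ
      rw [build]
      split
      · simp only [List.countP_cons, ih]
        have : ¬ ((v, pick L v N k γ (m :: ms)).1 = u) := fun h => hu (by simpa using h.symm)
        simp [this]
      · simp [List.countP_cons, ih]

end Build
end Recol

namespace Recol
variable {V : Type} [DecidableEq V] {G : SimpleGraph V} {L : V → Finset ℕ}

lemma ValidSeq.mem_fst {s : Finset V} {γ ms} (h : ValidSeq G L s γ ms) :
    ∀ m ∈ ms, (m : V × ℕ).1 ∈ s := by
  induction h with
  | nil => simp
  | cons h1 _ _ _ _ ih => intro m hm; rcases List.mem_cons.1 hm with rfl | hm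
                          · exact h1
                          · exact ih m hm

section BuildValid

variable {v : V} {N : Finset V} {k : ℕ} {s' : Finset V}
  (hk : 1 ≤ k) (hcard : N.card + k < (L v).card)
  (hvs : v ∉ s') (hadj : ∀ u ∈ s', G.Adj v u → u ∈ N)

include hk hcard hvs hadj in
lemma build_valid (ms : List (V × ℕ)) : ∀ (γ δ : V → ℕ), ValidSeq G L s' δ ms →
    (∀ u, u ≠ v → γ u = δ u) → γ v ∈ L v →
    ValidSeq G L (insert v s') γ (build L v N k γ ms) := by
  induction ms with
  | nil => intro γ δ _ _ _; rw [build]; exact ValidSeq.nil γ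
  | cons m ms ih =>
      intro γ δ hval hag hLv
      have hmv : m.1 ≠ v := by
        rintro rfl
        exact hvs (hval.mem_fst m (by simp))
      obtain ⟨h1, h2, h3, h4, h5⟩ :
          m.1 ∈ s' ∧ m.2 ∈ L m.1 ∧ m.2 ≠ δ m.1 ∧ (∀ u ∈ s', G.Adj m.1 u → m.2 ≠ δ u) ∧
            ValidSeq G L s' (rstep δ m) ms := by
        cases hval with
        | cons h1 h2 h3 h4 h5 => exact ⟨h1, h2, h3, h4, h5⟩
      rw [build]
      split
      · rename_i hconf
        obtain ⟨hmN, hcol⟩ := hconf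
        set a := pick L v N k γ (m :: ms) with ha
        obtain ⟨haL, hana⟩ := pick_spec L v N k hcard γ (m :: ms)
        have hm2av : m.2 ∈ avoid N k γ (m :: ms) := by
          refine Finset.mem_union_right _ ?_
          rw [List.mem_toFinset, ncolors_cons, if_pos hmN]
          cases k with
          | zero => omega
          | succ k => simp
        have ham2 : a ≠ m.2 := fun h => hana (by rw [← ha, h]; exact hm2av)
        refine ValidSeq.cons (Finset.mem_insert_self v s') haL ?_ ?_ ?_
        · -- a ≠ γ v
          intro h
          exact ham2 (h.trans hcol.symm)
        · -- a avoids current colors of v's neighbors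
          intro u hu hadjvu
          rcases Finset.mem_insert.1 hu with rfl | hu
          · exact absurd hadjvu (G.irrefl)
          · intro h
            exact hana (Finset.mem_union_left _ (Finset.mem_image.2 ⟨u, hadj u hu hadjvu, h.symm⟩))
        · -- now the original move m
          refine ValidSeq.cons (Finset.mem_insert_of_mem h1) h2 ?_ ?_ ?_
          · rw [rstep_apply_ne _ _ (show m.1 ≠ (v, a).1 from hmv), hag m.1 hmv]
            exact h3
          · intro u hu hadjmu
            rcases Finset.mem_insert.1 hu with rfl | hu
            · simp only [rstep, Function.update_self]
              exact fun h => ham2 h.symm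
            · have humv : u ≠ v := fun h => hvs (h ▸ hu)
              rw [rstep_apply_ne _ _ (show u ≠ (v, a).1 from humv), hag u humv]
              exact h4 u hu hadjmu
          · refine ih _ (rstep δ m) h5 ?_ ?_
            · intro w hw
              by_cases hwm : w = m.1
              · subst hwm; simp
              · rw [rstep_apply_ne _ _ hwm, rstep_apply_ne _ _ hwm,
                  rstep_apply_ne _ _ (show w ≠ (v, a).1 from hw), hag w hw]
            · rw [rstep_apply_ne _ _ (show v ≠ m.1 from fun h => hmv h.symm),
                rstep_apply_self]
              exact haL
      · rename_i hconf
        refine ValidSeq.cons (Finset.mem_insert_of_mem h1) h2 ?_ ?_ ?_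
        · rw [hag m.1 hmv]; exact h3
        · intro u hu hadjmu
          rcases Finset.mem_insert.1 hu with rfl | hu
          · -- u = v : m.2 ≠ γ v since no conflict
            have hmN : m.1 ∈ N := hadj m.1 h1 (G.adj_symm hadjmu)
            intro h
            exact hconf ⟨hmN, h⟩
          · rw [hag u (fun h => hvs (h ▸ hu))]
            exact h4 u hu hadjmu
        · refine ih _ (rstep δ m) h5 ?_ ?_
          · intro w hw
            by_cases hwm : w = m.1
            · subst hwm; simp
            · rw [rstep_apply_ne _ _ hwm, rstep_apply_ne _ _ hwm, hag w hw]
          · rw [rstep_apply_ne _ _ (show v ≠ m.1 from fun h => hmv h.symm)]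
            exact hLv

end BuildValid
end Recol

namespace Recol
variable {V : Type} [DecidableEq V]

section Count

/-- `γ` at `v` is safe for the next `j` neighbor recolorings. -/
def safeFor (v : V) (N : Finset V) (j : ℕ) (γ : V → ℕ) (ms : List (V × ℕ)) : Prop :=
  ∀ col ∈ (ncolors N ms).take j, γ v ≠ col

lemma safeFor_zero (v : V) (N : Finset V) (γ : V → ℕ) (ms : List (V × ℕ)) :
    safeFor v N 0 γ ms := by
  simp [safeFor]

variable (L : V → Finset ℕ) (v : V) {N : Finset V} {k : ℕ}

lemma build_countP_v (hk : 1 ≤ k) (hcard : N.card + k < (L v).card) (ms : List (V × ℕ)) :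
    ∀ (γ : V → ℕ) (j : ℕ), (∀ m ∈ ms, (m : V × ℕ).1 ≠ v) → safeFor v N j γ ms →
    (build L v N k γ ms).countP (fun m => m.1 = v) ≤
      (ms.countP (fun m => m.1 ∈ N) + (k - 1) - j) / k := by
  induction ms with
  | nil => intro γ j _ _; rw [build]; simp
  | cons m ms ih =>
      intro γ j hnv hsafe
      have hmv : m.1 ≠ v := hnv m (by simp)
      have hnv' : ∀ m' ∈ ms, (m' : V × ℕ).1 ≠ v := fun m' hm' => hnv m' (by simp [hm'])
      rw [build]
      split
      · rename_i hconf
        obtain ⟨hmN, hcol⟩ := hconf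
        set a := pick L v N k γ (m :: ms) with ha
        obtain ⟨haL, hana⟩ := pick_spec L v N k hcard γ (m :: ms)
        -- after recoloring `v` to `a`, we are safe for `k - 1` more steps
        have hsafe' : safeFor v N (k - 1) (rstep (rstep γ (v, a)) m) ms := by
          intro col hcol'
          have hv' : rstep (rstep γ (v, a)) m v = a := by
            rw [rstep_apply_ne _ _ (fun h => hmv h.symm)]
            simp [rstep]
          rw [hv']
          intro hac
          have : col ∈ avoid N k γ (m :: ms) := by
            refine Finset.mem_union_right _ ?_
            rw [List.mem_toFinset, ncolors_cons, if_pos hmN]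
            cases k with
            | zero => omega
            | succ k =>
                simp only [List.take_succ_cons, List.mem_cons]
                exact Or.inr (by simpa using hcol')
          exact hana (by rw [← ha, hac]; exact this)
        have hb := ih (rstep (rstep γ (v, a)) m) (k - 1) hnv' hsafe'
        -- `j` must be `0`-like: the head conflict color is `γ v`
        have hj : ¬ safeFor v N j γ (m :: ms) ∨ j = 0 := by
          cases j with
          | zero => exact Or.inr rfl
          | succ j =>
              left
              intro hs
              refine hs (γ v) ?_ rfl
              rw [ncolors_cons, if_pos hmN, hcol]
              simp
        have hj0 : j = 0 := hj.resolve_left (not_not_intro hsafe)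
        subst hj0
        have e1 : ((v, a) :: m :: build L v N k (rstep (rstep γ (v, a)) m) ms).countP
            (fun m => m.1 = v) =
            (build L v N k (rstep (rstep γ (v, a)) m) ms).countP (fun m => m.1 = v) + 1 := by
          simp [List.countP_cons, hmv]
        have e2 : (m :: ms).countP (fun m => m.1 ∈ N) =
            ms.countP (fun m => m.1 ∈ N) + 1 := by
          simp [List.countP_cons, hmN]
        have harith : (ms.countP (fun m => m.1 ∈ N) + (k - 1) - (k - 1)) / k + 1 ≤
            ((m :: ms).countP (fun m => m.1 ∈ N) + (k - 1) - 0) / k := by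
          rw [e2]
          have h1 : ms.countP (fun m => m.1 ∈ N) + (k - 1) - (k - 1) =
              ms.countP (fun m => m.1 ∈ N) := by omega
          have h2 : ms.countP (fun m => m.1 ∈ N) + 1 + (k - 1) - 0 =
              ms.countP (fun m => m.1 ∈ N) + k := by omega
          rw [h1, h2, Nat.add_div_right _ (by omega : 0 < k)]
        omega
      · rename_i hconf
        by_cases hmN : m.1 ∈ N
        · -- non-conflicting neighbor move
          have hm2 : m.2 ≠ γ v := fun h => hconf ⟨hmN, h⟩
          have hsafe' : safeFor v N (j - 1) (rstep γ m) ms := by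
            intro col hcol'
            rw [rstep_apply_ne _ _ (fun h => hmv h.symm)]
            cases j with
            | zero => simp at hcol'
            | succ j =>
                refine hsafe col ?_
                rw [ncolors_cons, if_pos hmN]
                simp only [List.take_succ_cons, List.mem_cons]
                exact Or.inr (by simpa using hcol')
          have hb := ih (rstep γ m) (j - 1) hnv' hsafe'
          have e1 : (m :: build L v N k (rstep γ m) ms).countP (fun m => m.1 = v) =
              (build L v N k (rstep γ m) ms).countP (fun m => m.1 = v) := by
            simp [List.countP_cons, hmv]
          have e2 : (m :: ms).countP (fun m => m.1 ∈ N) =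
              ms.countP (fun m => m.1 ∈ N) + 1 := by
            simp [List.countP_cons, hmN]
          have hmono : (ms.countP (fun m => m.1 ∈ N) + (k - 1) - (j - 1)) / k ≤
              ((m :: ms).countP (fun m => m.1 ∈ N) + (k - 1) - j) / k := by
            rw [e2]; exact Nat.div_le_div_right (by omega)
          omega
        · -- move not at a neighbor of v
          have hsafe' : safeFor v N j (rstep γ m) ms := by
            intro col hcol'
            rw [rstep_apply_ne _ _ (fun h => hmv h.symm)]
            refine hsafe col ?_
            rw [ncolors_cons, if_neg hmN]
            exact hcol'
          have hb := ih (rstep γ m) j hnv' hsafe'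
          have e1 : (m :: build L v N k (rstep γ m) ms).countP (fun m => m.1 = v) =
              (build L v N k (rstep γ m) ms).countP (fun m => m.1 = v) := by
            simp [List.countP_cons, hmv]
          have e2 : (m :: ms).countP (fun m => m.1 ∈ N) =
              ms.countP (fun m => m.1 ∈ N) := by
            simp [List.countP_cons, hmN]
          have hmono : (ms.countP (fun m => m.1 ∈ N) + (k - 1) - j) / k ≤
              ((m :: ms).countP (fun m => m.1 ∈ N) + (k - 1) - j) / k := by
            rw [e2]
          omega

end Count
end Recol

namespace Recol
variable {V : Type} [DecidableEq V] {G : SimpleGraph V} {L : V → Finset ℕ} {s : Finset V}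

lemma countP_mem_eq_sum (N : Finset V) (ms : List (V × ℕ)) :
    ms.countP (fun m => m.1 ∈ N) = ∑ u ∈ N, ms.countP (fun m => m.1 = u) := by
  induction ms with
  | nil => simp
  | cons m ms ih =>
      simp only [List.countP_cons, ih, Finset.sum_add_distrib]
      congr 1
      by_cases h : m.1 ∈ N
      · rw [Finset.sum_eq_single m.1] <;> simp +contextual [h, eq_comm]
      · rw [Finset.sum_eq_zero (fun u hu => by
          simp only [decide_eq_true_eq]
          rw [if_neg (fun h' : m.1 = u => h (h' ▸ hu))])]
        simp [h]

lemma recolorCount_eq_card (σ : ℕ → V → ℕ) (n : ℕ) (u : V) :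
    recolorCount σ n u = ((Finset.range n).filter (fun i => σ i u ≠ σ (i + 1) u)).card := by
  rw [recolorCount, ← Set.ncard_coe_finset]
  congr 1
  ext i
  simp [Finset.mem_filter, Finset.mem_range]

lemma recolorCount_play {γ : V → ℕ} {ms : List (V × ℕ)} (hval : ValidSeq G L s γ ms) (u : V) :
    recolorCount (fun i => play γ (ms.take i)) ms.length u =
      ms.countP (fun m => m.1 = u) := by
  induction ms using List.reverseRecOn generalizing γ with
  | nil => rw [recolorCount_eq_card]; simp
  | append_singleton ms m ih =>
      have hvtake : ValidSeq G L s γ ms := by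
        have := hval.take ms.length
        rwa [List.take_append_of_le_length le_rfl, List.take_length] at this
      have hlast : ValidSeq G L s (play γ ms) [m] := by
        have := hval.drop_play ms.length
        rwa [List.take_append_of_le_length le_rfl, List.take_length,
          List.drop_left] at this
      have h3 : m.2 ≠ play γ ms m.1 := by cases hlast with | cons _ _ h3 _ _ => exact h3
      have hσ1 : ∀ i, i ≤ ms.length →
          play γ ((ms ++ [m]).take i) = play γ (ms.take i) := fun i hi => by
        rw [List.take_append_of_le_length hi]
      have hσn : play γ ((ms ++ [m]).take ms.length) = play γ ms := by
        rw [List.take_append_of_le_length le_rfl, List.take_length]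
      have hσn1 : play γ ((ms ++ [m]).take (ms.length + 1)) = rstep (play γ ms) m := by
        rw [List.take_of_length_le (by simp), play_append]
        rfl
      rw [recolorCount_eq_card]
      have hlen : (ms ++ [m]).length = ms.length + 1 := by simp
      rw [hlen, Finset.range_add_one, Finset.filter_insert]
      have hfc : (Finset.range ms.length).filter
            (fun i => play γ ((ms ++ [m]).take i) u ≠ play γ ((ms ++ [m]).take (i + 1)) u) =
          (Finset.range ms.length).filter
            (fun i => play γ (ms.take i) u ≠ play γ (ms.take (i + 1)) u) := by
        refine Finset.filter_congr ?_
        intro i hi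
        rw [hσ1 i (le_of_lt (Finset.mem_range.1 hi)),
          hσ1 (i + 1) (Finset.mem_range.1 hi)]
      have ihc := ih hvtake
      rw [recolorCount_eq_card] at ihc
      by_cases hmu : m.1 = u
      · have hPn : play γ ((ms ++ [m]).take ms.length) u ≠
            play γ ((ms ++ [m]).take (ms.length + 1)) u := by
          rw [hσn, hσn1, ← hmu, rstep_apply_self]
          exact fun h => h3 h.symm
        rw [if_pos hPn, Finset.card_insert_of_notMem (by simp), hfc, ihc,
          List.countP_append]
        simp [hmu]
      · have hPn : ¬ (play γ ((ms ++ [m]).take ms.length) u ≠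
            play γ ((ms ++ [m]).take (ms.length + 1)) u) := by
          rw [hσn, hσn1, rstep_apply_ne _ _ (fun h => hmu h.symm)]
          simp
        rw [if_neg hPn, hfc, ihc, List.countP_append]
        simp [hmu]

end Recol

namespace Recol

variable {V : Type} [DecidableEq V] {G : SimpleGraph V} {L : V → Finset ℕ}

/-- Main induction: on the induced subgraph on `s` there is a valid move sequence
from `α` to `β` using each vertex at most `c` times. -/
lemma main_aux {d c : ℕ} (hdeg : Degenerate G d) (hL : ∀ v, 2 * d + 2 ≤ (L v).card)
    (hcc : (d * c + d) / (d + 1) + 1 ≤ c) (s : Finset V) :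
    ∀ α β : V → ℕ, IsColOn G L s α → IsColOn G L s β → (∀ u, u ∉ s → β u = α u) →
      ∃ ms : List (V × ℕ), ValidSeq G L s α ms ∧ play α ms = β ∧
        ∀ u, ms.countP (fun m => m.1 = u) ≤ c := by
  classical
  induction s using Finset.strongInduction with
  | _ s ih =>
    rcases s.eq_empty_or_nonempty with rfl | hne
    · intro α β _ _ hout
      refine ⟨[], ValidSeq.nil α, ?_, by simp⟩
      funext u
      exact (hout u (by simp)).symm
    · intro α β hα hβ hout
      obtain ⟨v, hvs', hdv⟩ := hdeg ↑s (Finset.coe_nonempty.2 hne)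
      have hvs : v ∈ s := hvs'
      set N : Finset V := s.filter (fun u => G.Adj v u) with hN
      have hNcard : N.card ≤ d := by
        have hcoe : (G.neighborSet v ∩ ↑s : Set V) = ↑N := by
          ext u
          simp [hN, SimpleGraph.mem_neighborSet, and_comm]
        rw [hcoe, Set.ncard_coe_finset] at hdv
        exact hdv
      set s' := s.erase v with hs'
      have hvn' : v ∉ s' := Finset.notMem_erase v s
      have hmem' : ∀ u ∈ s', u ∈ s := fun u hu => Finset.mem_of_mem_erase hu
      set β' := Function.update β v (α v) with hβ'
      have hβ'on : ∀ u ∈ s', β' u = β u := fun u hu =>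
        Function.update_of_ne (fun (h : u = v) => hvn' (h ▸ hu)) _ _
      obtain ⟨ms', hval', hplay', hcnt'⟩ := ih s' (Finset.erase_ssubset hvs) α β'
        ⟨fun a ha b hb => hα.1 a (hmem' a ha) b (hmem' b hb),
         fun u hu => hα.2 u (hmem' u hu)⟩
        ⟨fun a ha b hb hadj => by
          rw [hβ'on a ha, hβ'on b hb]; exact hβ.1 a (hmem' a ha) b (hmem' b hb) hadj,
         fun u hu => by rw [hβ'on u hu]; exact hβ.2 u (hmem' u hu)⟩
        (fun u hu => by
          by_cases huv : u = v
          · subst huv; simp [hβ']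
          · rw [hβ', Function.update_of_ne huv]
            exact hout u (fun h => hu (Finset.mem_erase.2 ⟨huv, h⟩)))
      set k := d + 1 with hk
      have hcc2 : (d * c + d) / (d + 1) + 1 ≤ c := hcc
      have hcard : N.card + k < (L v).card := by have := hL v; omega
      have hadjN : ∀ u ∈ s', G.Adj v u → u ∈ N := fun u hu hadj =>
        Finset.mem_filter.2 ⟨hmem' u hu, hadj⟩
      have hαLv : α v ∈ L v := hα.2 v hvs
      set ms₁ := build L v N k α ms' with hms₁
      have hval₁ : ValidSeq G L s α ms₁ := by
        have := build_valid (G := G) (by omega : 1 ≤ k) hcard hvn' hadjN ms' α α hval'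
          (fun _ _ => rfl) hαLv
        rwa [Finset.insert_erase hvs] at this
      have hplay₁ : ∀ u, u ≠ v → play α ms₁ u = β u := by
        intro u hu
        rw [hms₁, play_build L v N k ms' α α (fun _ _ => rfl) u hu, hplay', hβ',
          Function.update_of_ne hu]
      have hnv : ∀ m ∈ ms', (m : V × ℕ).1 ≠ v := fun m hm h =>
        hvn' (h ▸ hval'.mem_fst m hm)
      have hnb : ms'.countP (fun m => m.1 ∈ N) ≤ d * c := by
        rw [countP_mem_eq_sum]
        calc ∑ u ∈ N, ms'.countP (fun m => m.1 = u) ≤ ∑ _u ∈ N, c :=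
              Finset.sum_le_sum (fun u _ => hcnt' u)
          _ = N.card * c := by rw [Finset.sum_const, smul_eq_mul]
          _ ≤ d * c := Nat.mul_le_mul_right c hNcard
      have hv₁ : ms₁.countP (fun m => m.1 = v) ≤ (d * c + d) / (d + 1) := by
        have hb := build_countP_v L v (by omega : 1 ≤ k) hcard ms' α 0
          hnv (safeFor_zero v N α ms')
        have h1 : ms'.countP (fun m => m.1 ∈ N) + (k - 1) - 0 ≤ d * c + d := by omega
        refine le_trans hb ?_
        calc (ms'.countP (fun m => m.1 ∈ N) + (k - 1) - 0) / k ≤ (d * c + d) / k :=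
              Nat.div_le_div_right h1
          _ = (d * c + d) / (d + 1) := by rw [hk]
      have hcnt₁ : ∀ u, u ≠ v → ms₁.countP (fun m => m.1 = u) ≤ c := fun u hu => by
        rw [hms₁, build_countP_ne L v N k u hu ms' α]
        exact hcnt' u
      by_cases hfin : play α ms₁ v = β v
      · refine ⟨ms₁, hval₁, ?_, ?_⟩
        · funext u
          by_cases hu : u = v
          · subst hu; exact hfin
          · exact hplay₁ u hu
        · intro u
          by_cases hu : u = v
          · subst hu; omega
          · exact hcnt₁ u hu
      · refine ⟨ms₁ ++ [(v, β v)], ?_, ?_, ?_⟩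
        · refine hval₁.append ?_
          refine ValidSeq.cons hvs (hβ.2 v hvs) (fun h => hfin h.symm) ?_ (ValidSeq.nil _)
          intro u hu hadj
          have huv : u ≠ v := fun h => G.irrefl (h ▸ hadj)
          rw [hplay₁ u huv]
          exact hβ.1 v hvs u hu hadj
        · rw [play_append]
          funext u
          by_cases hu : u = v
          · subst hu
            simp [play, rstep]
          · rw [play_cons, play_nil, rstep_apply_ne _ _ hu]
            exact hplay₁ u hu
        · intro u
          rw [List.countP_append]
          by_cases hu : u = v
          · subst hu
            have : ([((u : V), β u)] : List (V × ℕ)).countP (fun m => m.1 = u) = 1 := by simp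
            omega
          · have hvu : ¬ v = u := fun h => hu h.symm
            have h0 : ([((v : V), β v)] : List (V × ℕ)).countP (fun m => m.1 = u) = 0 := by
              simp [List.countP_cons, hvu]
            rw [h0]
            simpa using hcnt₁ u hu

end Recol

/-- if `G` is `d`-degenerate, `|L(v)| ≥ 2d + 2` for all `v`, and
`c > 0` satisfies `⌈dc/(d+1)⌉ + 1 ≤ c`, then between any two `L`-colorings of `G`
there is a recoloring sequence recoloring every vertex at most `c` times;
in particular it has at most `c·|V(G)|` steps. -/
theorem degenerate_recoloring {V : Type} [Fintype V] (G : SimpleGraph V)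
    (L : V → Finset ℕ) (d c : ℕ)
    (hdeg : Degenerate G d)
    (hL : ∀ v, 2 * d + 2 ≤ (L v).card)
    (hc : 0 < c) (hcc : (d * c + d) / (d + 1) + 1 ≤ c) :
    ∀ α β : V → ℕ, IsLColoring G L α → IsLColoring G L β →
      ∃ (n : ℕ) (σ : ℕ → V → ℕ), n ≤ c * Fintype.card V ∧
        RecolorSeq G L α β n σ ∧ ∀ v, recolorCount σ n v ≤ c := by
  classical
  intro α β hα hβ
  have hαon : Recol.IsColOn G L Finset.univ α :=
    ⟨fun a _ b _ hadj => hα.1 hadj, fun u _ => hα.2 u⟩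
  have hβon : Recol.IsColOn G L Finset.univ β :=
    ⟨fun a _ b _ hadj => hβ.1 hadj, fun u _ => hβ.2 u⟩
  obtain ⟨ms, hval, hplay, hcnt⟩ := Recol.main_aux hdeg hL hcc Finset.univ α β hαon hβon
    (fun u hu => absurd (Finset.mem_univ u) hu)
  refine ⟨ms.length, fun i => Recol.play α (ms.take i), ?_, ⟨?_, ?_, ?_, ?_⟩, ?_⟩
  · rw [Recol.length_eq_sum_countP]
    calc ∑ u : V, ms.countP (fun m => m.1 = u) ≤ ∑ _u : V, c :=
          Finset.sum_le_sum (fun u _ => hcnt u)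
      _ = Fintype.card V * c := by rw [Finset.sum_const, smul_eq_mul, Finset.card_univ]
      _ = c * Fintype.card V := Nat.mul_comm _ _
  · simp [Recol.play]
  · show Recol.play α (ms.take ms.length) = β
    rw [List.take_length]; exact hplay
  · intro i _
    have hcol := hαon.play (hval.take i)
    exact ⟨fun a b hadj => hcol.1 a (Finset.mem_univ a) b (Finset.mem_univ b) hadj,
      fun u => hcol.2 u (Finset.mem_univ u)⟩
  · intro i hi
    have hdrop := hval.drop_play i
    rw [List.drop_eq_getElem_cons hi] at hdrop
    have hsucc : Recol.play α (ms.take (i + 1)) =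
        Recol.rstep (Recol.play α (ms.take i)) ms[i] := by
      rw [List.take_succ, List.getElem?_eq_getElem hi, Recol.play_append]
      rfl
    have h3 : ms[i].2 ≠ Recol.play α (ms.take i) ms[i].1 := by
      cases hdrop with | cons _ _ h3 _ _ => exact h3
    refine ⟨ms[i].1, ?_, ?_⟩
    · show Recol.play α (ms.take i) ms[i].1 ≠ Recol.play α (ms.take (i + 1)) ms[i].1
      rw [hsucc, Recol.rstep_apply_self]
      exact fun h => h3 h.symm
    · intro u hu
      show Recol.play α (ms.take i) u = Recol.play α (ms.take (i + 1)) u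
      rw [hsucc, Recol.rstep_apply_ne _ _ hu]
  · intro u
    rw [Recol.recolorCount_play hval u]
    exact hcnt u
end

section
/- Let G be a k-colorable graph with independence number at most p (p ≥ 2, k ≥ 2), and let k' ≥ ⌊pk/2⌋ + 1. Then for any two proper k'-colorings c₁ and c₂ of G, there is a sequence of single-vertex recolorings transforming c₁ into c₂ (through proper k'-colorings) in which each vertex is recolored at most 4 times. In particular, the diameter of 𝒢(G, k') is at most 4|V(G)|. -/
namespace BIR

variable {V α : Type} [DecidableEq V]

def applyMove (c : V → α) (m : V × α) : V → α := Function.update c m.1 m.2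

def chainOK (G : SimpleGraph V) : (V → α) → List (V × α) → Prop
  | _, [] => True
  | c, m :: L => m.2 ≠ c m.1 ∧ Proper G (applyMove c m) ∧ chainOK G (applyMove c m) L

lemma chainOK_append {G : SimpleGraph V} :
    ∀ (L₁ : List (V × α)) (c : V → α) (L₂ : List (V × α)),
      chainOK G c L₁ → chainOK G (L₁.foldl applyMove c) L₂ → chainOK G c (L₁ ++ L₂)
  | [], _, _, _, h₂ => h₂
  | m :: L, c, L₂, h₁, h₂ =>
    ⟨h₁.1, h₁.2.1, chainOK_append L (applyMove c m) L₂ h₁.2.2 h₂⟩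

lemma chainOK_proper {G : SimpleGraph V} :
    ∀ (L : List (V × α)) (c : V → α), Proper G c → chainOK G c L →
      Proper G (L.foldl applyMove c)
  | [], _, hc, _ => hc
  | _ :: L, c, _, h => chainOK_proper L _ h.2.1 h.2.2

/-- reversal of a chain -/
def revChain (c : V → α) : List (V × α) → List (V × α)
  | [] => []
  | m :: L => revChain (applyMove c m) L ++ [(m.1, c m.1)]

lemma revChain_spec {G : SimpleGraph V} :
    ∀ (L : List (V × α)) (c : V → α), Proper G c → chainOK G c L →
      chainOK G (L.foldl applyMove c) (revChain c L) ∧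
      (revChain c L).foldl applyMove (L.foldl applyMove c) = c ∧
      (revChain c L).map Prod.fst = (L.map Prod.fst).reverse := by
  intro L
  induction L with
  | nil => intro c hc _; exact ⟨trivial, rfl, rfl⟩
  | cons m t ih =>
    intro c hc h
    obtain ⟨h1, h2, h3⟩ := h
    set c₁ := applyMove c m with hc₁
    obtain ⟨A, B, C⟩ := ih c₁ h2 h3
    have hfold : (m :: t).foldl applyMove c = t.foldl applyMove c₁ := rfl
    have hback : applyMove c₁ (m.1, c m.1) = c := by
      funext v
      by_cases hv : v = m.1
      · subst hv; simp [applyMove]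
      · simp [hc₁, applyMove, Function.update_of_ne hv]
    constructor
    · rw [hfold]
      show chainOK G (t.foldl applyMove c₁) (revChain c₁ t ++ [(m.1, c m.1)])
      apply chainOK_append _ _ _ A
      rw [B]
      refine ⟨?_, ?_, trivial⟩
      · show c m.1 ≠ c₁ m.1
        have : c₁ m.1 = m.2 := by simp [hc₁, applyMove]
        rw [this]; exact fun h => h1 h.symm
      · rw [hback]; exact hc
    constructor
    · rw [hfold]
      show (revChain c₁ t ++ [(m.1, c m.1)]).foldl applyMove (t.foldl applyMove c₁) = c
      rw [List.foldl_append, B]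
      simpa using hback
    · show (revChain c₁ t ++ [(m.1, c m.1)]).map Prod.fst = (m.1 :: t.map Prod.fst).reverse
      rw [List.map_append, C, List.reverse_cons]
      simp

end BIR

namespace BIR

variable {V α : Type} [DecidableEq V]

lemma key {G : SimpleGraph V} :
    ∀ (L : List (V × α)) (c : V → α), Proper G c → chainOK G c L →
      RecolorSeqP G c (L.foldl applyMove c) L.length
        (fun i => (L.take i).foldl applyMove c) ∧
      ∀ u, recolorCount (fun i => (L.take i).foldl applyMove c) L.length u ≤
        (L.map Prod.fst).count u := by
  intro L
  induction L with
  | nil =>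
    intro c hc _
    constructor
    · refine ⟨rfl, rfl, ?_, ?_⟩
      · intro i _; simpa using hc
      · intro i hi; simp at hi
    · intro u
      have : {i | i < (0:ℕ) ∧ (([] : List (V × α)).take i).foldl applyMove c u ≠
          (([] : List (V × α)).take (i+1)).foldl applyMove c u} = ∅ := by
        ext i; simp
      rw [recolorCount]
      simp only [List.length_nil]
      rw [this, Set.ncard_empty]
      exact Nat.zero_le _
  | cons m t ih =>
    intro c hc h
    obtain ⟨h1, h2, h3⟩ := h
    set c₁ := applyMove c m with hc₁
    obtain ⟨⟨R1, R2, R3, R4⟩, cnt⟩ := ih c₁ h2 h3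
    set τ : ℕ → V → α := fun i => (t.take i).foldl applyMove c₁ with hτ
    set σ : ℕ → V → α := fun i => ((m :: t).take i).foldl applyMove c with hσ
    have hσ0 : σ 0 = c := rfl
    have hσs : ∀ j, σ (j + 1) = τ j := fun j => rfl
    have hn : (m :: t).length = t.length + 1 := rfl
    have hτ0 : τ 0 = c₁ := rfl
    constructor
    · refine ⟨rfl, ?_, ?_, ?_⟩
      · show σ (t.length + 1) = (m :: t).foldl applyMove c
        rw [hσs]; exact R2
      · intro i hi
        match i with
        | 0 => rw [hσ0]; exact hc
        | (j+1) => rw [hσs]; exact R3 j (by omega)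
      · intro i hi
        match i with
        | 0 =>
          refine ⟨m.1, ?_, ?_⟩
          · rw [hσ0, hσs, hτ0]
            show c m.1 ≠ c₁ m.1
            have : c₁ m.1 = m.2 := by simp [hc₁, applyMove]
            rw [this]; exact fun h => h1 h.symm
          · intro u hu
            rw [hσ0, hσs, hτ0]
            show c u = c₁ u
            simp [hc₁, applyMove, Function.update_of_ne hu]
        | (j+1) =>
          obtain ⟨v, hv1, hv2⟩ := R4 j (by simpa using hi)
          exact ⟨v, by rw [hσs, hσs]; exact hv1, fun u hu => by rw [hσs, hσs]; exact hv2 u hu⟩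
    · intro u
      have hS' : {j | j < t.length ∧ τ j u ≠ τ (j+1) u}.Finite :=
        (Set.finite_Iio t.length).subset (fun j hj => hj.1)
      have hsub : {i | i < (m :: t).length ∧ σ i u ≠ σ (i+1) u} ⊆
          {0} ∪ Nat.succ '' {j | j < t.length ∧ τ j u ≠ τ (j+1) u} := by
        intro i hi
        match i with
        | 0 => exact Set.mem_union_left _ rfl
        | (j+1) =>
          refine Set.mem_union_right _ ⟨j, ⟨?_, ?_⟩, rfl⟩
          · have := hi.1; rw [hn] at this; omega
          · have := hi.2; rwa [hσs, hσs] at this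
      rw [recolorCount]
      have hcnt' := cnt u
      rw [recolorCount] at hcnt'
      have himg : (Nat.succ '' {j | j < t.length ∧ τ j u ≠ τ (j+1) u}).ncard =
          {j | j < t.length ∧ τ j u ≠ τ (j+1) u}.ncard :=
        Set.ncard_image_of_injective _ Nat.succ_injective
      by_cases hm : m.1 = u
      · have hcount : ((m :: t).map Prod.fst).count u = (t.map Prod.fst).count u + 1 := by
          show (m.1 :: t.map Prod.fst).count u = _
          rw [hm, List.count_cons_self]
        rw [hcount]
        calc {i | i < (m :: t).length ∧ σ i u ≠ σ (i+1) u}.ncard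
            ≤ ({0} ∪ Nat.succ '' {j | j < t.length ∧ τ j u ≠ τ (j+1) u}).ncard :=
              Set.ncard_le_ncard hsub ((Set.finite_singleton 0).union (hS'.image _))
          _ ≤ ({0} : Set ℕ).ncard +
              (Nat.succ '' {j | j < t.length ∧ τ j u ≠ τ (j+1) u}).ncard :=
              Set.ncard_union_le _ _
          _ = 1 + {j | j < t.length ∧ τ j u ≠ τ (j+1) u}.ncard := by
              rw [Set.ncard_singleton, himg]
          _ ≤ 1 + (t.map Prod.fst).count u := by omega
          _ = (t.map Prod.fst).count u + 1 := by omega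
      · have h0 : (0 : ℕ) ∉ {i | i < (m :: t).length ∧ σ i u ≠ σ (i+1) u} := by
          intro h0
          apply h0.2
          rw [hσ0, hσs, hτ0]
          show c u = c₁ u
          simp [hc₁, applyMove, Function.update_of_ne (fun h => hm h.symm)]
        have hsub2 : {i | i < (m :: t).length ∧ σ i u ≠ σ (i+1) u} ⊆
            Nat.succ '' {j | j < t.length ∧ τ j u ≠ τ (j+1) u} := by
          intro i hi
          rcases hsub hi with h | h
          · exact absurd (by simpa using h ▸ hi : _) (by simp at h; subst h; exact fun _ => h0 hi)
          · exact h
        have hcount : ((m :: t).map Prod.fst).count u = (t.map Prod.fst).count u := by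
          show (m.1 :: t.map Prod.fst).count u = _
          exact List.count_cons_of_ne hm
        rw [hcount]
        calc {i | i < (m :: t).length ∧ σ i u ≠ σ (i+1) u}.ncard
            ≤ (Nat.succ '' {j | j < t.length ∧ τ j u ≠ τ (j+1) u}).ncard :=
              Set.ncard_le_ncard hsub2 (hS'.image _)
          _ = {j | j < t.length ∧ τ j u ≠ τ (j+1) u}.ncard := himg
          _ ≤ (t.map Prod.fst).count u := hcnt'

lemma length_le_of_count [Fintype V] (l : List V) (B : ℕ) (h : ∀ u, l.count u ≤ B) :
    l.length ≤ B * Fintype.card V := by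
  classical
  have h1 : l.length = ∑ u ∈ l.toFinset, l.count u := (List.sum_toFinset_count_eq_length l).symm
  have h2 : ∑ u ∈ l.toFinset, l.count u ≤ ∑ u ∈ (Finset.univ : Finset V), l.count u :=
    Finset.sum_le_sum_of_subset (Finset.subset_univ _)
  have h3 : ∑ u ∈ (Finset.univ : Finset V), l.count u ≤
      ∑ _u ∈ (Finset.univ : Finset V), B :=
    Finset.sum_le_sum (fun u _ => h u)
  simp only [Finset.sum_const, Finset.card_univ, smul_eq_mul] at h3
  calc l.length = _ := h1
    _ ≤ _ := h2
    _ ≤ Fintype.card V * B := h3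
    _ = B * Fintype.card V := Nat.mul_comm _ _


section Classes

variable {k k' : ℕ} {G : SimpleGraph V} {γ : V → Fin k}

lemma proper_comp (hγ : Proper G γ) {β : Fin k → Fin k'} (hβ : Function.Injective β) :
    Proper G (fun v => β (γ v)) :=
  fun _ _ h hb => hγ h (hβ hb)

lemma classMoveAux (hγ : Proper G γ) (i : Fin k) (b : Fin k') :
    ∀ (l : List V) (c : V → Fin k'), Proper G c → l.Nodup →
      (∀ v ∈ l, γ v = i ∧ c v ≠ b) → (∀ v, c v = b → γ v = i) →
      chainOK G c (l.map (fun v => (v, b))) ∧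
      (l.map (fun v => (v, b))).foldl applyMove c = fun v => if v ∈ l then b else c v := by
  intro l
  induction l with
  | nil => intro c hc _ _ _; exact ⟨trivial, by funext v; simp⟩
  | cons a t ih =>
    intro c hc hnd hmem hb
    obtain ⟨ha, hat⟩ := List.nodup_cons.mp hnd
    have hai : γ a = i := (hmem a (by simp)).1
    have hab : c a ≠ b := (hmem a (by simp)).2
    set c₁ : V → Fin k' := applyMove c (a, b) with hc₁
    have hc₁v : ∀ v, v ≠ a → c₁ v = c v := by
      intro v hv; simp [hc₁, applyMove, Function.update_of_ne hv]
    have hc₁a : c₁ a = b := by simp [hc₁, applyMove]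
    have hp₁ : Proper G c₁ := by
      intro x y hadj h
      by_cases hx : x = a
      · have hy : y ≠ a := fun hy => G.loopless.irrefl y ((hx.trans hy.symm) ▸ hadj)
        rw [hx, hc₁a, hc₁v y hy] at h
        exact hγ hadj (by rw [hx, hai]; exact (hb y h.symm).symm)
      · by_cases hy : y = a
        · rw [hy, hc₁a, hc₁v x hx] at h
          exact hγ hadj (by rw [hy, hai]; exact hb x h)
        · rw [hc₁v x hx, hc₁v y hy] at h
          exact hc hadj h
    have hb₁ : ∀ v, c₁ v = b → γ v = i := by
      intro v hv
      by_cases hva : v = a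
      · subst hva; exact hai
      · exact hb v (by rwa [hc₁v v hva] at hv)
    obtain ⟨A, B⟩ := ih c₁ hp₁ hat
      (fun v hv => ⟨(hmem v (by simp [hv])).1, by
        rw [hc₁v v (fun h => ha (h ▸ hv))]; exact (hmem v (by simp [hv])).2⟩) hb₁
    constructor
    · exact ⟨fun h => hab h.symm, hp₁, A⟩
    · show (t.map (fun v => (v, b))).foldl applyMove c₁ = _
      rw [B]
      funext v
      by_cases hv : v ∈ t
      · simp [hv]
      · by_cases hva : v = a
        · subst hva; simp [hv, hc₁a]
        · simp [hv, hva, hc₁v v hva]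

lemma classMove [Fintype V] (hγ : Proper G γ) (i : Fin k) (b : Fin k') (c : V → Fin k')
    (hc : Proper G c) (hb : ∀ v, c v = b → γ v = i) :
    ∃ L : List (V × Fin k'), chainOK G c L ∧
      (L.foldl applyMove c = fun v => if γ v = i then b else c v) ∧
      (L.map Prod.fst).Nodup ∧ (∀ v ∈ L.map Prod.fst, γ v = i) := by
  classical
  set l : List V := (Finset.univ.filter (fun v => γ v = i ∧ c v ≠ b)).toList with hl
  have hmeml : ∀ v, v ∈ l ↔ (γ v = i ∧ c v ≠ b) := by
    intro v; simp [hl]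
  obtain ⟨A, B⟩ := classMoveAux hγ i b l c hc (Finset.nodup_toList _)
    (fun v hv => (hmeml v).mp hv) hb
  have hfst : (l.map (fun v => (v, b))).map Prod.fst = l := by
    simp [Function.comp_def]
  refine ⟨l.map (fun v => (v, b)), A, ?_, ?_, ?_⟩
  · rw [B]
    funext v
    by_cases hv : γ v = i
    · by_cases hcb : c v = b
      · simp [hv, (hmeml v), hcb]
      · simp [hv, (hmeml v).mpr ⟨hv, hcb⟩]
    · have : v ∉ l := fun h => hv ((hmeml v).mp h).1
      simp [hv, this]
  · rw [hfst]; exact Finset.nodup_toList _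
  · rw [hfst]; exact fun v hv => ((hmeml v).mp hv).1


lemma exists_good {p : ℕ} [Fintype V] (hγ : Proper G γ)
    (hind : ∀ s : Set V, s.Pairwise (fun a b => ¬ G.Adj a b) → s.ncard ≤ p)
    (hp : 2 ≤ p) (hk' : p * k / 2 + 1 ≤ k')
    (S : Finset (Fin k)) (c : V → Fin k') (β : Fin k → Fin k') :
    ∃ b : Fin k', (∀ j, j ∉ S → β j ≠ b) ∧
      (Finset.univ.filter (fun v => γ v ∈ S ∧ c v = b)).card ≤ 1 := by
  classical
  by_contra hcon
  push_neg at hcon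
  set A : Finset V := Finset.univ.filter (fun v => γ v ∈ S) with hA
  set B : Finset (Fin k') := Finset.univ.filter (fun b => ∀ j, j ∉ S → β j ≠ b) with hB
  have h2 : ∀ b ∈ B, 2 ≤ (A.filter (fun v => c v = b)).card := by
    intro b hb
    have h1 := hcon b (by simpa [hB] using hb)
    have heq : A.filter (fun v => c v = b) =
        Finset.univ.filter (fun v => γ v ∈ S ∧ c v = b) := by
      rw [hA, Finset.filter_filter]
    rw [heq]; omega
  have hsum : 2 * B.card ≤ A.card := by
    have e1 : A.card = ∑ b ∈ (Finset.univ : Finset (Fin k')),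
        (A.filter (fun v => c v = b)).card :=
      Finset.card_eq_sum_card_fiberwise (fun v _ => Finset.mem_univ (c v))
    have e2 : ∑ b ∈ B, (A.filter (fun v => c v = b)).card ≤
        ∑ b ∈ (Finset.univ : Finset (Fin k')), (A.filter (fun v => c v = b)).card :=
      Finset.sum_le_sum_of_subset (Finset.subset_univ _)
    have e4 : ∑ _b ∈ B, 2 ≤ ∑ b ∈ B, (A.filter (fun v => c v = b)).card :=
      Finset.sum_le_sum h2
    have e3 : ∑ _b ∈ B, 2 = B.card * 2 := by rw [Finset.sum_const, smul_eq_mul]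
    omega
  have hBcard : k' ≤ B.card + (k - S.card) := by
    have hsplit : B.card +
        (Finset.univ.filter (fun b => ¬ ∀ j, j ∉ S → β j ≠ b)).card = k' := by
      rw [hB, Finset.card_filter_add_card_filter_not]
      simp
    have hsub : Finset.univ.filter (fun b => ¬ ∀ j, j ∉ S → β j ≠ b) ⊆
        (Finset.univ \ S).image β := by
      intro b hb
      rw [Finset.mem_filter] at hb
      push_neg at hb
      obtain ⟨j, hj, hbj⟩ := hb.2
      exact Finset.mem_image.mpr ⟨j, Finset.mem_sdiff.mpr ⟨Finset.mem_univ _, hj⟩, hbj⟩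
    have hle := (Finset.card_le_card hsub).trans (Finset.card_image_le)
    have hsd : (Finset.univ \ S).card = k - S.card := by
      rw [Finset.card_sdiff_of_subset (Finset.subset_univ _)]
      simp
    omega
  have hAcard : A.card ≤ S.card * p := by
    have e1 : A.card = ∑ i ∈ S, (A.filter (fun v => γ v = i)).card :=
      Finset.card_eq_sum_card_fiberwise
        (fun v hv => by
          have := Finset.mem_filter.mp (hA ▸ hv)
          exact this.2)
    have e2 : ∀ i ∈ S, (A.filter (fun v => γ v = i)).card ≤ p := by
      intro i _
      have hpair : (↑(A.filter (fun v => γ v = i)) : Set V).Pairwise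
          (fun a b => ¬ G.Adj a b) := by
        intro x hx y hy _ hadj
        rw [Finset.mem_coe, Finset.mem_filter] at hx hy
        exact hγ hadj (hx.2.trans hy.2.symm)
      have := hind _ hpair
      rwa [Set.ncard_coe_finset] at this
    have e3 : ∑ i ∈ S, (A.filter (fun v => γ v = i)).card ≤ ∑ _i ∈ S, p :=
      Finset.sum_le_sum e2
    have e4 : ∑ _i ∈ S, p = S.card * p := by rw [Finset.sum_const, smul_eq_mul]
    omega
  have hsk : S.card ≤ k := by
    have := Finset.card_le_univ S
    simpa using this
  obtain ⟨m, hm⟩ : ∃ m, p * k = m := ⟨_, rfl⟩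
  obtain ⟨a, ha⟩ : ∃ a, S.card * p = a := ⟨_, rfl⟩
  obtain ⟨r, hr⟩ : ∃ r, p * (k - S.card) = r := ⟨_, rfl⟩
  rw [hm] at hk'
  rw [ha] at hAcard
  have hsplit : m = a + r := by
    rw [← hm, ← ha, ← hr, Nat.mul_comm S.card p, ← Nat.mul_add,
      Nat.add_sub_cancel' hsk]
  have hge : 2 * (k - S.card) ≤ r := by
    rw [← hr]; exact Nat.mul_le_mul_right _ hp
  omega


lemma alignAux {p : ℕ} [Fintype V] (hγ : Proper G γ)
    (hind : ∀ s : Set V, s.Pairwise (fun a b => ¬ G.Adj a b) → s.ncard ≤ p)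
    (hp : 2 ≤ p) (hk' : p * k / 2 + 1 ≤ k') :
    ∀ (s : ℕ) (S : Finset (Fin k)) (c : V → Fin k') (β : Fin k → Fin k'),
      S.card = s → Proper G c →
      (∀ v, γ v ∉ S → c v = β (γ v)) →
      (∀ i, i ∉ S → ∀ j, j ∉ S → β i = β j → i = j) →
      (∀ v, γ v ∈ S → ∀ i, i ∉ S → c v ≠ β i) →
      ∃ (L : List (V × Fin k')) (β' : Fin k → Fin k'),
        chainOK G c L ∧ (L.foldl applyMove c = fun v => β' (γ v)) ∧
        Function.Injective β' ∧ (L.map Prod.fst).Nodup ∧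
        (∀ v ∈ L.map Prod.fst, γ v ∈ S) := by
  classical
  intro s
  induction s with
  | zero =>
    intro S c β hcard hc halign hinj _
    have hS : S = ∅ := Finset.card_eq_zero.mp hcard
    subst hS
    refine ⟨[], β, trivial, ?_, ?_, List.nodup_nil, by simp⟩
    · funext v
      exact halign v (Finset.notMem_empty _)
    · intro x y hxy
      exact hinj x (Finset.notMem_empty _) y (Finset.notMem_empty _) hxy
  | succ s ih =>
    intro S c β hcard hc halign hinj hfresh
    obtain ⟨b, hbfree, hbcard⟩ := exists_good hγ hind hp hk' S c β
    set Ab : Finset V := Finset.univ.filter (fun v => γ v ∈ S ∧ c v = b) with hAb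
    have hSne : S.Nonempty := Finset.card_pos.mp (by omega)
    -- choose the class i
    obtain ⟨i, hiS, hwi⟩ : ∃ i, i ∈ S ∧ ∀ v ∈ Ab, γ v = i := by
      by_cases hne : Ab.Nonempty
      · obtain ⟨w, hw⟩ := hne
        have hw' := Finset.mem_filter.mp hw
        refine ⟨γ w, hw'.2.1, ?_⟩
        intro v hv
        have : v = w := Finset.card_le_one.mp hbcard v hv w hw
        rw [this]
      · obtain ⟨i, hi⟩ := hSne
        refine ⟨i, hi, ?_⟩
        intro v hv
        exact absurd ⟨v, hv⟩ hne
    have hbonly : ∀ v, c v = b → γ v = i := by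
      intro v hv
      by_cases hvS : γ v ∈ S
      · exact hwi v (Finset.mem_filter.mpr ⟨Finset.mem_univ _, hvS, hv⟩)
      · exact absurd (halign v hvS ▸ hv) (hbfree (γ v) hvS)
    obtain ⟨L₀, hA0, hB0, hnd0, hset0⟩ := classMove hγ i b c hc hbonly
    set c₁ : V → Fin k' := fun v => if γ v = i then b else c v with hc₁
    set S₁ : Finset (Fin k) := S.erase i with hS₁
    set β₁ : Fin k → Fin k' := Function.update β i b with hβ₁
    have hmem₁ : ∀ j, j ∉ S₁ → j ≠ i → j ∉ S := by
      intro j hj hji hjS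
      exact hj (Finset.mem_erase.mpr ⟨hji, hjS⟩)
    have hβ₁i : β₁ i = b := by simp [hβ₁]
    have hβ₁j : ∀ j, j ≠ i → β₁ j = β j := by
      intro j hj; simp [hβ₁, Function.update_of_ne hj]
    have hc₁p : Proper G c₁ := by
      rw [← hB0]; exact chainOK_proper _ _ hc hA0
    have halign₁ : ∀ v, γ v ∉ S₁ → c₁ v = β₁ (γ v) := by
      intro v hv
      by_cases hvi : γ v = i
      · rw [hvi, hβ₁i]; simp [hc₁, hvi]
      · rw [hβ₁j _ hvi]
        have : c₁ v = c v := by simp [hc₁, hvi]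
        rw [this]
        exact halign v (hmem₁ _ hv hvi)
    have hinj₁ : ∀ x, x ∉ S₁ → ∀ y, y ∉ S₁ → β₁ x = β₁ y → x = y := by
      intro x hx y hy hxy
      by_cases hxi : x = i
      · by_cases hyi : y = i
        · rw [hxi, hyi]
        · rw [hxi, hβ₁i, hβ₁j _ hyi] at hxy
          exact absurd hxy.symm (hbfree y (hmem₁ _ hy hyi))
      · by_cases hyi : y = i
        · rw [hyi, hβ₁i, hβ₁j _ hxi] at hxy
          exact absurd hxy (hbfree x (hmem₁ _ hx hxi))
        · rw [hβ₁j _ hxi, hβ₁j _ hyi] at hxy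
          exact hinj x (hmem₁ _ hx hxi) y (hmem₁ _ hy hyi) hxy
    have hfresh₁ : ∀ v, γ v ∈ S₁ → ∀ j, j ∉ S₁ → c₁ v ≠ β₁ j := by
      intro v hv j hj
      have hvi : γ v ≠ i := (Finset.mem_erase.mp hv).1
      have hvS : γ v ∈ S := (Finset.mem_erase.mp hv).2
      have hcv : c₁ v = c v := by simp [hc₁, hvi]
      rw [hcv]
      by_cases hji : j = i
      · rw [hji, hβ₁i]
        intro h
        exact hvi (hbonly v h)
      · rw [hβ₁j _ hji]
        exact hfresh v hvS j (hmem₁ _ hj hji)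
    have hcard₁ : S₁.card = s := by
      rw [hS₁, Finset.card_erase_of_mem hiS, hcard]
      omega
    obtain ⟨L', β', hA', hB', hinj', hnd', hset'⟩ :=
      ih S₁ c₁ β₁ hcard₁ hc₁p halign₁ hinj₁ hfresh₁
    refine ⟨L₀ ++ L', β', ?_, ?_, hinj', ?_, ?_⟩
    · apply chainOK_append _ _ _ hA0
      rw [hB0]; exact hA'
    · rw [List.foldl_append, hB0]; exact hB'
    · rw [List.map_append]
      refine List.Nodup.append hnd0 hnd' ?_
      intro v hv hv'
      have h1 : γ v = i := hset0 v hv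
      have h2 : γ v ∈ S₁ := hset' v hv'
      exact (Finset.mem_erase.mp h2).1 h1
    · intro v hv
      rw [List.map_append, List.mem_append] at hv
      rcases hv with hv | hv
      · rw [hset0 v hv]; exact hiS
      · exact (Finset.mem_erase.mp (hset' v hv)).2


lemma renameAux [Fintype V] (hγ : Proper G γ) (hkk' : k < k')
    (β' : Fin k → Fin k') (hβ' : Function.Injective β') :
    ∀ (n : ℕ) (F : Finset (Fin k)) (β : Fin k → Fin k') (bud : Fin k → ℕ),
      (Finset.univ \ F).card = n → Function.Injective β →
      (∀ i ∈ F, β i = β' i) →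
      (∀ i, i ∉ F → 1 ≤ bud i) →
      (∀ i, i ∉ F → (∃ j, j ∉ F ∧ β i = β' j) → 2 ≤ bud i) →
      ∃ L : List (V × Fin k'),
        chainOK G (fun v => β (γ v)) L ∧
        (L.foldl applyMove (fun v => β (γ v)) = fun v => β' (γ v)) ∧
        ∀ u, (L.map Prod.fst).count u ≤ bud (γ u) := by
  classical
  intro n
  induction n with
  | zero =>
    intro F β bud hcard hβinj hagree _ _
    have hF : ∀ i, i ∈ F := by
      intro i
      by_contra hi
      have : i ∈ Finset.univ \ F := Finset.mem_sdiff.mpr ⟨Finset.mem_univ _, hi⟩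
      rw [Finset.card_eq_zero.mp hcard] at this
      exact Finset.notMem_empty _ this
    refine ⟨[], trivial, ?_, by simp⟩
    funext v
    exact hagree (γ v) (hF _)
  | succ n ih =>
    intro F β bud hcard hβinj hagree hbud1 hbud2
    have herase : ∀ i, i ∉ F → (Finset.univ \ insert i F).card = n := by
      intro i hiF
      have he : Finset.univ \ insert i F = (Finset.univ \ F).erase i := by
        ext j
        simp only [Finset.mem_sdiff, Finset.mem_erase, Finset.mem_insert, Finset.mem_univ,
          true_and]
        tauto
      rw [he, Finset.card_erase_of_mem
        (Finset.mem_sdiff.mpr ⟨Finset.mem_univ _, hiF⟩), hcard]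
      omega
    by_cases hcase : ∃ i, i ∉ F ∧ ∀ j, j ≠ i → β j ≠ β' i
    · obtain ⟨i, hiF, hi⟩ := hcase
      by_cases he : β i = β' i
      · -- no move needed for class i
        obtain ⟨L, hA, hB, hcnt⟩ := ih (insert i F) β bud (herase i hiF) hβinj
          (fun j hj => by
            rcases Finset.mem_insert.mp hj with hj | hj
            · rw [hj]; exact he
            · exact hagree j hj)
          (fun j hj => hbud1 j (fun h => hj (Finset.mem_insert_of_mem h)))
          (fun j hj ⟨j', hj', he'⟩ => hbud2 j (fun h => hj (Finset.mem_insert_of_mem h))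
            ⟨j', fun h => hj' (Finset.mem_insert_of_mem h), he'⟩)
        exact ⟨L, hA, hB, hcnt⟩
      · -- move class i to β' i
        have hb : ∀ v, β (γ v) = β' i → γ v = i := by
          intro v hv
          by_contra hne
          exact hi (γ v) hne hv
        obtain ⟨L₀, hA0, hB0, hnd0, hset0⟩ :=
          classMove hγ i (β' i) (fun v => β (γ v)) (proper_comp hγ hβinj) hb
        set β₁ : Fin k → Fin k' := Function.update β i (β' i) with hβ₁
        have hβ₁i : β₁ i = β' i := by simp [hβ₁]
        have hβ₁j : ∀ j, j ≠ i → β₁ j = β j := by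
          intro j hj; simp [hβ₁, Function.update_of_ne hj]
        have hc₁ : (fun v => if γ v = i then β' i else β (γ v)) = fun v => β₁ (γ v) := by
          funext v
          by_cases hv : γ v = i
          · rw [hv]; simp [hβ₁i, hv]
          · simp [hv, hβ₁j _ hv]
        rw [hc₁] at hB0
        have hβ₁inj : Function.Injective β₁ := by
          intro x y hxy
          by_cases hx : x = i
          · by_cases hy : y = i
            · rw [hx, hy]
            · rw [hx, hβ₁i, hβ₁j _ hy] at hxy
              exact absurd hxy.symm (hi y hy)
          · by_cases hy : y = i
            · rw [hy, hβ₁i, hβ₁j _ hx] at hxy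
              exact absurd hxy (hi x hx)
            · rw [hβ₁j _ hx, hβ₁j _ hy] at hxy
              exact hβinj hxy
        obtain ⟨L', hA', hB', hcnt'⟩ := ih (insert i F) β₁
          (fun j => if j = i then bud i - 1 else bud j) (herase i hiF) hβ₁inj
          (fun j hj => by
            rcases Finset.mem_insert.mp hj with hj' | hj'
            · rw [hj']; exact hβ₁i
            · have hji : j ≠ i := fun h => hiF (h ▸ hj')
              rw [hβ₁j _ hji]
              exact hagree j hj')
          (fun j hj => by
            have hji : j ≠ i := fun h => hj (h ▸ Finset.mem_insert_self i F)
            try dsimp only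
            rw [if_neg hji]
            exact hbud1 j (fun h => hj (Finset.mem_insert_of_mem h)))
          (fun j hj ⟨j', hj', he'⟩ => by
            have hji : j ≠ i := fun h => hj (h ▸ Finset.mem_insert_self i F)
            try dsimp only
            rw [if_neg hji]
            rw [hβ₁j _ hji] at he'
            exact hbud2 j (fun h => hj (Finset.mem_insert_of_mem h))
              ⟨j', fun h => hj' (Finset.mem_insert_of_mem h), he'⟩)
        refine ⟨L₀ ++ L', ?_, ?_, ?_⟩
        · apply chainOK_append _ _ _ hA0
          rw [hB0]; exact hA'
        · rw [List.foldl_append, hB0]; exact hB'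
        · intro u
          rw [List.map_append, List.count_append]
          by_cases hu : γ u = i
          · have h1 : (L₀.map Prod.fst).count u ≤ 1 :=
              List.nodup_iff_count_le_one.mp hnd0 u
            have h2 := hcnt' u
            try dsimp only at h2
            rw [hu] at h2 ⊢
            rw [if_pos rfl] at h2
            have h3 := hbud1 i hiF
            omega
          · have h1 : (L₀.map Prod.fst).count u = 0 := by
              rw [List.count_eq_zero]
              intro hmem
              exact hu (hset0 u hmem)
            have h2 := hcnt' u
            try dsimp only at h2
            rw [if_neg hu] at h2
            omega
    · -- stuck case: park then fix
      push_neg at hcase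
      have hne : (Finset.univ \ F).Nonempty := Finset.card_pos.mp (by omega)
      obtain ⟨i₀, hi₀⟩ := hne
      have hi₀F : i₀ ∉ F := (Finset.mem_sdiff.mp hi₀).2
      obtain ⟨j, hji, hbj⟩ := hcase i₀ hi₀F
      have hjF : j ∉ F := by
        intro hjF
        exact hji (hβ' ((hagree j hjF).symm.trans hbj))
      -- find a free color f
      obtain ⟨f, hf⟩ : ∃ f, f ∉ Finset.univ.image β := by
        have h1 : (Finset.univ.image β).card ≤ k := by
          have := Finset.card_image_le (s := (Finset.univ : Finset (Fin k))) (f := β)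
          simpa using this
        have h2 : 0 < (Finset.univ.image β)ᶜ.card := by
          rw [Finset.card_compl]
          simp only [Fintype.card_fin]
          omega
        obtain ⟨f, hf⟩ := Finset.card_pos.mp h2
        exact ⟨f, Finset.mem_compl.mp hf⟩
      have hffree : ∀ x, β x ≠ f := by
        intro x hx
        exact hf (Finset.mem_image.mpr ⟨x, Finset.mem_univ _, hx⟩)
      have hfne : f ≠ β' i₀ := by
        rw [← hbj]
        exact fun h => hffree j h.symm
      -- move 1 : park class j at f
      obtain ⟨L₁, hA1, hB1, hnd1, hset1⟩ :=
        classMove hγ j f (fun v => β (γ v)) (proper_comp hγ hβinj)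
          (fun v hv => absurd hv (hffree (γ v)))
      set β₂ : Fin k → Fin k' := Function.update β j f with hβ₂
      have hβ₂j : β₂ j = f := by simp [hβ₂]
      have hβ₂m : ∀ m, m ≠ j → β₂ m = β m := by
        intro m hm; simp [hβ₂, Function.update_of_ne hm]
      have hc₂ : (fun v => if γ v = j then f else β (γ v)) = fun v => β₂ (γ v) := by
        funext v
        by_cases hv : γ v = j
        · rw [hv]; simp [hβ₂j, hv]
        · simp [hv, hβ₂m _ hv]
      rw [hc₂] at hB1
      have hβ₂inj : Function.Injective β₂ := by
        intro x y hxy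
        by_cases hx : x = j
        · by_cases hy : y = j
          · rw [hx, hy]
          · rw [hx, hβ₂j, hβ₂m _ hy] at hxy
            exact absurd hxy.symm (hffree y)
        · by_cases hy : y = j
          · rw [hy, hβ₂j, hβ₂m _ hx] at hxy
            exact absurd hxy (hffree x)
          · rw [hβ₂m _ hx, hβ₂m _ hy] at hxy
            exact hβinj hxy
      -- move 2 : class i₀ to β' i₀
      have hb₂ : ∀ v, β₂ (γ v) = β' i₀ → γ v = i₀ := by
        intro v hv
        exfalso
        by_cases hvj : γ v = j
        · rw [hvj, hβ₂j] at hv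
          exact hfne hv
        · rw [hβ₂m _ hvj] at hv
          exact hvj (hβinj (hv.trans hbj.symm))
      obtain ⟨L₂, hA2, hB2, hnd2, hset2⟩ :=
        classMove hγ i₀ (β' i₀) (fun v => β₂ (γ v)) (proper_comp hγ hβ₂inj) hb₂
      set β₃ : Fin k → Fin k' := Function.update β₂ i₀ (β' i₀) with hβ₃
      have hβ₃i : β₃ i₀ = β' i₀ := by simp [hβ₃]
      have hβ₃m : ∀ m, m ≠ i₀ → β₃ m = β₂ m := by
        intro m hm; simp [hβ₃, Function.update_of_ne hm]
      have hc₃ : (fun v => if γ v = i₀ then β' i₀ else β₂ (γ v)) = fun v => β₃ (γ v) := by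
        funext v
        by_cases hv : γ v = i₀
        · rw [hv]; simp [hβ₃i, hv]
        · simp [hv, hβ₃m _ hv]
      rw [hc₃] at hB2
      have hβ₃inj : Function.Injective β₃ := by
        intro x y hxy
        by_cases hx : x = i₀
        · by_cases hy : y = i₀
          · rw [hx, hy]
          · exfalso
            rw [hx, hβ₃i, hβ₃m _ hy] at hxy
            by_cases hyj : y = j
            · rw [hyj, hβ₂j] at hxy
              exact hfne hxy.symm
            · rw [hβ₂m _ hyj] at hxy
              exact hyj (hβinj (hxy.symm.trans hbj.symm))
        · by_cases hy : y = i₀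
          · exfalso
            rw [hy, hβ₃i, hβ₃m _ hx] at hxy
            by_cases hxj : x = j
            · rw [hxj, hβ₂j] at hxy
              exact hfne hxy
            · rw [hβ₂m _ hxj] at hxy
              exact hxj (hβinj (hxy.trans hbj.symm))
          · rw [hβ₃m _ hx, hβ₃m _ hy] at hxy
            exact hβ₂inj hxy
      have hji₀ : j ≠ i₀ := hji
      obtain ⟨L', hA', hB', hcnt'⟩ := ih (insert i₀ F) β₃
        (fun m => if m = j then bud j - 1 else if m = i₀ then bud i₀ - 1 else bud m)
        (herase i₀ hi₀F) hβ₃inj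
        (fun m hm => by
          rcases Finset.mem_insert.mp hm with hm' | hm'
          · rw [hm']; exact hβ₃i
          · have hmi : m ≠ i₀ := fun h => hi₀F (h ▸ hm')
            have hmj : m ≠ j := fun h => hjF (h ▸ hm')
            rw [hβ₃m _ hmi, hβ₂m _ hmj]
            exact hagree m hm')
        (fun m hm => by
          have hmi : m ≠ i₀ := fun h => hm (h ▸ Finset.mem_insert_self i₀ F)
          try dsimp only
          by_cases hmj : m = j
          · rw [if_pos hmj]
            have : 2 ≤ bud j := hbud2 j hjF ⟨i₀, hi₀F, hbj⟩
            omega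
          · rw [if_neg hmj, if_neg hmi]
            exact hbud1 m (fun h => hm (Finset.mem_insert_of_mem h)))
        (fun m hm ⟨m', hm', he'⟩ => by
          have hmi : m ≠ i₀ := fun h => hm (h ▸ Finset.mem_insert_self i₀ F)
          have hm'F : m' ∉ F := fun h => hm' (Finset.mem_insert_of_mem h)
          try dsimp only
          by_cases hmj : m = j
          · exfalso
            rw [hmj, hβ₃m _ hji₀, hβ₂j] at he'
            obtain ⟨j'', _, hj''⟩ := hcase m' hm'F
            exact hffree j'' (hj''.trans he'.symm)
          · rw [if_neg hmj, if_neg hmi]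
            rw [hβ₃m _ hmi, hβ₂m _ hmj] at he'
            exact hbud2 m (fun h => hm (Finset.mem_insert_of_mem h)) ⟨m', hm'F, he'⟩)
      refine ⟨L₁ ++ (L₂ ++ L'), ?_, ?_, ?_⟩
      · apply chainOK_append _ _ _ hA1
        rw [hB1]
        apply chainOK_append _ _ _ hA2
        rw [hB2]; exact hA'
      · rw [List.foldl_append, hB1, List.foldl_append, hB2]; exact hB'
      · intro u
        rw [List.map_append, List.count_append, List.map_append, List.count_append]
        have h1 : (L₁.map Prod.fst).count u ≤ 1 := List.nodup_iff_count_le_one.mp hnd1 u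
        have h2 : (L₂.map Prod.fst).count u ≤ 1 := List.nodup_iff_count_le_one.mp hnd2 u
        have h3 := hcnt' u
        try dsimp only at h3
        by_cases huj : γ u = j
        · have h2' : (L₂.map Prod.fst).count u = 0 := by
            rw [List.count_eq_zero]
            intro hmem
            exact hji₀ (huj ▸ hset2 u hmem)
          rw [huj] at h3 ⊢
          rw [if_pos rfl] at h3
          have := hbud2 j hjF ⟨i₀, hi₀F, hbj⟩
          omega
        · have h1' : (L₁.map Prod.fst).count u = 0 := by
            rw [List.count_eq_zero]
            intro hmem
            exact huj (hset1 u hmem)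
          by_cases hui : γ u = i₀
          · rw [hui] at h3 ⊢
            rw [if_neg (fun h => hji₀ h.symm), if_pos rfl] at h3
            have := hbud1 i₀ hi₀F
            omega
          · have h2'' : (L₂.map Prod.fst).count u = 0 := by
              rw [List.count_eq_zero]
              intro hmem
              exact hui (hset2 u hmem)
            rw [if_neg huj, if_neg hui] at h3
            omega

end Classes
end BIR
/-- if `G` is `k`-colorable with independence number at most `p`
(`p, k ≥ 2`) and `k' ≥ ⌊pk/2⌋ + 1`, then any two proper `k'`-colorings are joined by a
sequence of single-vertex recolorings (through proper `k'`-colorings) recoloring each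
vertex at most 4 times; in particular of length at most `4·|V(G)|`. -/
theorem bounded_indep_recoloring {V : Type} [Fintype V] (G : SimpleGraph V)
    (p k k' : ℕ) (hp : 2 ≤ p) (hk : 2 ≤ k)
    (hcol : G.Colorable k)
    (hind : ∀ s : Set V, s.Pairwise (fun a b => ¬ G.Adj a b) → s.ncard ≤ p)
    (hk' : p * k / 2 + 1 ≤ k') :
    ∀ c₁ c₂ : V → Fin k', Proper G c₁ → Proper G c₂ →
      ∃ (n : ℕ) (σ : ℕ → V → Fin k'), n ≤ 4 * Fintype.card V ∧
        RecolorSeqP G c₁ c₂ n σ ∧ ∀ v, recolorCount σ n v ≤ 4 := by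
  classical
  intro c₁ c₂ hc₁ hc₂
  obtain ⟨γ0⟩ := hcol
  set γ : V → Fin k := fun v => γ0 v with hγdef
  have hγ : Proper G γ := fun a b h => γ0.valid h
  have hk'1 : 1 ≤ k' := le_trans (Nat.le_add_left 1 _) hk'
  have hkk' : k < k' := by
    have h1 : 2 * k ≤ p * k := Nat.mul_le_mul_right k hp
    have h2 : k ≤ p * k / 2 := by
      have h3 : (2 * k) / 2 ≤ (p * k) / 2 := Nat.div_le_div_right h1
      simpa using h3
    obtain ⟨m, hm⟩ : ∃ m, p * k / 2 = m := ⟨_, rfl⟩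
    rw [hm] at hk' h2
    omega
  set d : Fin k' := ⟨0, hk'1⟩ with hd
  -- align c₁
  obtain ⟨L₁, β₁, hA1, hB1, hinj1, hnd1, -⟩ :=
    BIR.alignAux hγ hind hp hk' (Finset.univ.card) Finset.univ c₁ (fun _ => d) rfl hc₁
      (fun v hv => absurd (Finset.mem_univ _) hv)
      (fun i hi => absurd (Finset.mem_univ _) hi)
      (fun v _ i hi => absurd (Finset.mem_univ _) hi)
  -- align c₂
  obtain ⟨L₂, β₂, hA2, hB2, hinj2, hnd2, -⟩ :=
    BIR.alignAux hγ hind hp hk' (Finset.univ.card) Finset.univ c₂ (fun _ => d) rfl hc₂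
      (fun v hv => absurd (Finset.mem_univ _) hv)
      (fun i hi => absurd (Finset.mem_univ _) hi)
      (fun v _ i hi => absurd (Finset.mem_univ _) hi)
  -- rename β₁ to β₂
  obtain ⟨LB, hALB, hBLB, hcntLB⟩ :=
    BIR.renameAux hγ hkk' β₂ hinj2 ((Finset.univ \ (∅ : Finset (Fin k))).card)
      (∅ : Finset (Fin k)) β₁ (fun _ => 2) rfl hinj1
      (fun i hi => absurd hi (Finset.notMem_empty _))
      (fun _ _ => one_le_two)
      (fun _ _ _ => le_refl 2)
  -- reverse the c₂ chain
  obtain ⟨hA2r, hB2r, hfst2r⟩ := BIR.revChain_spec L₂ c₂ hc₂ hA2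
  rw [hB2] at hA2r hB2r
  set L : List (V × Fin k') := L₁ ++ (LB ++ BIR.revChain c₂ L₂) with hL
  have hchain : BIR.chainOK G c₁ L := by
    apply BIR.chainOK_append _ _ _ hA1
    rw [hB1]
    apply BIR.chainOK_append _ _ _ hALB
    rw [hBLB]
    exact hA2r
  have hfoldl : L.foldl BIR.applyMove c₁ = c₂ := by
    rw [hL, List.foldl_append, hB1, List.foldl_append, hBLB]
    exact hB2r
  have hcount : ∀ u, (L.map Prod.fst).count u ≤ 4 := by
    intro u
    rw [hL, List.map_append, List.count_append, List.map_append, List.count_append]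
    have x1 : (L₁.map Prod.fst).count u ≤ 1 := List.nodup_iff_count_le_one.mp hnd1 u
    have x2 : ((LB.map Prod.fst).count u) ≤ 2 := hcntLB u
    have x3 : (((BIR.revChain c₂ L₂).map Prod.fst).count u) ≤ 1 := by
      rw [hfst2r, List.count_reverse]
      exact List.nodup_iff_count_le_one.mp hnd2 u
    omega
  obtain ⟨hseq, hrec⟩ := BIR.key L c₁ hc₁ hchain
  rw [hfoldl] at hseq
  refine ⟨L.length, fun i => (L.take i).foldl BIR.applyMove c₁, ?_, hseq, ?_⟩
  · have := BIR.length_le_of_count (L.map Prod.fst) 4 hcount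
    rwa [List.length_map] at this
  · intro v
    exact (hrec v).trans (hcount v)
end

section
/- For every p ≥ 2 and every k ≥ 2, there exists a k-colorable graph G with independence number at most p such that G admits a frozen ⌊pk/2⌋-coloring, and hence the recoloring graph 𝒢(G, ⌊pk/2⌋) is disconnected whenever it has more than one vertex. -/
/-- A frozen `t`-coloring: a proper coloring such that every vertex sees all `t`
colors in its closed neighborhood. -/
def Frozen {V : Type} (G : SimpleGraph V) {t : ℕ} (c : V → Fin t) : Prop :=
  Proper G c ∧ ∀ v, ∀ i : Fin t, ∃ u, (u = v ∨ G.Adj v u) ∧ c u = i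

/-- The `t`-recoloring graph: vertices are the proper `t`-colorings of `G`, two
colorings being adjacent iff they differ at exactly one vertex. -/
def RecolorGraph {V : Type} (G : SimpleGraph V) (t : ℕ) :
    SimpleGraph {c : V → Fin t // Proper G c} where
  Adj c₁ c₂ := ∃ v, c₁.1 v ≠ c₂.1 v ∧ ∀ u, u ≠ v → c₁.1 u = c₂.1 u
  symm := by
    constructor
    rintro c₁ c₂ ⟨v, hv, h⟩
    exact ⟨v, hv.symm, fun u hu => (h u hu).symm⟩
  loopless := by
    constructor
    rintro c ⟨v, hv, -⟩
    exact hv rfl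

/-- Every `x < 2t` is either its residue mod `t` or that residue plus `t`. -/
lemma res_cases {t : ℕ} (x : ℕ) (hx : x < 2 * t) : x = x % t ∨ x = x % t + t := by
  rcases Nat.lt_or_ge x t with h | h
  · left; exact (Nat.mod_eq_of_lt h).symm
  · right
    have e : x % t = x - t := by
      rw [Nat.mod_eq_sub_mod h]; exact Nat.mod_eq_of_lt (by omega)
    omega

/-- There are no three distinct numbers below `2t` with the same residue mod `t`. -/
lemma no_three {t x y z : ℕ} (hx : x < 2 * t) (hy : y < 2 * t) (hz : z < 2 * t)
    (hxy : x % t = y % t) (hxz : x % t = z % t)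
    (h1 : x ≠ y) (h2 : x ≠ z) (h3 : y ≠ z) : False := by
  have e1 := res_cases x hx
  have e2 := res_cases y hy
  have e3 := res_cases z hz
  rw [hxy] at e1
  rw [← hxz, hxy] at e3
  generalize y % t = r at e1 e2 e3
  omega

/-- A frozen coloring is an isolated vertex of the recoloring graph, so if the
recoloring graph has at least two vertices it is disconnected. -/
lemma frozen_not_connected {V : Type} (G : SimpleGraph V) {t : ℕ} (c : V → Fin t)
    (hf : Frozen G c)
    (h : ∃ c₁ c₂ : {c : V → Fin t // Proper G c}, c₁ ≠ c₂) :
    ¬ (RecolorGraph G t).Connected := by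
  intro hcon
  obtain ⟨c₁, c₂, hne⟩ := h
  set cf : {c : V → Fin t // Proper G c} := ⟨c, hf.1⟩ with hcf
  have hiso : ∀ d, ¬ (RecolorGraph G t).Adj cf d := by
    rintro d ⟨v, hv, hrest⟩
    obtain ⟨u, hu, hcu⟩ := hf.2 v (d.1 v)
    rcases hu with rfl | hadj
    · exact hv hcu
    · have huv : u ≠ v := fun h => G.loopless.irrefl v (h ▸ hadj)
      have h2 := hrest u huv
      exact d.2 hadj (by rw [← h2]; exact hcu.symm)
  have key : ∀ x, (RecolorGraph G t).Reachable cf x → x = cf := by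
    intro x hr
    obtain ⟨w⟩ := hr
    cases w with
    | nil => rfl
    | cons h _ => exact absurd h (hiso _)
  have k1 := key c₁ (hcon.preconnected cf c₁)
  have k2 := key c₂ (hcon.preconnected cf c₂)
  exact hne (k1.trans k2.symm)

/-- for every `p ≥ 2` and `k ≥ 2` there is a `k`-colorable graph with
independence number at most `p` admitting a frozen `⌊pk/2⌋`-coloring; hence its
`⌊pk/2⌋`-recoloring graph is disconnected whenever it has more than one vertex. -/
theorem exists_frozen_graph (p k : ℕ) (hp : 2 ≤ p) (hk : 2 ≤ k) :
    ∃ (N : ℕ) (G : SimpleGraph (Fin N)),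
      G.Colorable k ∧
      (∀ s : Set (Fin N), s.Pairwise (fun a b => ¬ G.Adj a b) → s.ncard ≤ p) ∧
      (∃ c : Fin N → Fin (p * k / 2), Frozen G c) ∧
      ((∃ c₁ c₂ : {c : Fin N → Fin (p * k / 2) // Proper G c}, c₁ ≠ c₂) →
        ¬ (RecolorGraph G (p * k / 2)).Connected) := by
  set t := p * k / 2 with hT
  have hp0 : 0 < p := by omega
  have hpt : p ≤ t := by
    have h1 : p * 2 ≤ p * k := Nat.mul_le_mul_left p hk
    have h2 : p * 2 / 2 ≤ p * k / 2 := Nat.div_le_div_right h1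
    simpa using h2
  have ht0 : 0 < t := by omega
  have h2t : 2 * t ≤ p * k := by
    have := Nat.div_mul_le_self (p * k) 2
    omega
  set G : SimpleGraph (Fin (2 * t)) :=
    { Adj := fun a b => (a : ℕ) / p ≠ (b : ℕ) / p ∧ (a : ℕ) % t ≠ (b : ℕ) % t
      symm := ⟨fun a b h => ⟨h.1.symm, h.2.symm⟩⟩
      loopless := ⟨fun a h => h.1 rfl⟩ } with hG
  have hAdj : ∀ a b : Fin (2 * t),
      G.Adj a b ↔ ((a : ℕ) / p ≠ (b : ℕ) / p ∧ (a : ℕ) % t ≠ (b : ℕ) % t) := by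
    intro a b; rw [hG]
  have hdivk : ∀ a : Fin (2 * t), (a : ℕ) / p < k := by
    intro a
    have h1 : (a : ℕ) < p * k := lt_of_lt_of_le a.isLt h2t
    exact (Nat.div_lt_iff_lt_mul hp0).2 (lt_of_lt_of_eq h1 (Nat.mul_comm p k))
  have hdivlt : ∀ x : ℕ, x / p < (x + t) / p := by
    intro x
    calc x / p < x / p + 1 := Nat.lt_succ_self _
      _ = (x + p) / p := (Nat.add_div_right x hp0).symm
      _ ≤ (x + t) / p := Nat.div_le_div_right (by omega)
  -- the frozen coloring
  set c : Fin (2 * t) → Fin t := fun n => ⟨(n : ℕ) % t, Nat.mod_lt _ ht0⟩ with hc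
  have hfr : Frozen G c := by
    constructor
    · intro a b hab h
      exact ((hAdj a b).1 hab).2 (congrArg Fin.val h)
    · intro v i
      by_cases hvi : (i : ℕ) = (v : ℕ) % t
      · exact ⟨v, Or.inl rfl, Fin.ext hvi.symm⟩
      · have hit : (i : ℕ) < t := i.isLt
        by_cases hd : (v : ℕ) / p = (i : ℕ) / p
        · refine ⟨⟨(i : ℕ) + t, by omega⟩, Or.inr ((hAdj _ _).2 ⟨?_, ?_⟩), Fin.ext ?_⟩
          · show (v : ℕ) / p ≠ ((i : ℕ) + t) / p
            rw [hd]; exact Nat.ne_of_lt (hdivlt i)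
          · show (v : ℕ) % t ≠ ((i : ℕ) + t) % t
            rw [Nat.add_mod_right, Nat.mod_eq_of_lt hit]
            exact fun h => hvi h.symm
          · show ((i : ℕ) + t) % t = (i : ℕ)
            rw [Nat.add_mod_right]; exact Nat.mod_eq_of_lt hit
        · refine ⟨⟨(i : ℕ), by omega⟩, Or.inr ((hAdj _ _).2 ⟨?_, ?_⟩), Fin.ext ?_⟩
          · exact hd
          · show (v : ℕ) % t ≠ (i : ℕ) % t
            rw [Nat.mod_eq_of_lt hit]
            exact fun h => hvi h.symm
          · exact Nat.mod_eq_of_lt hit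
  refine ⟨2 * t, G, ?_, ?_, ⟨c, hfr⟩, fun hex => frozen_not_connected G c hfr hex⟩
  · -- k-colorable
    exact ⟨SimpleGraph.Coloring.mk (fun a => ⟨(a : ℕ) / p, hdivk a⟩)
      (fun {a b} hab => Fin.ne_of_val_ne ((hAdj a b).1 hab).1)⟩
  · -- independence number at most p
    intro s hs
    by_cases hcase : ∀ a ∈ s, ∀ b ∈ s, (a : ℕ) / p = (b : ℕ) / p
    · have hinj : Set.InjOn (fun a : Fin (2 * t) => (a : ℕ) % p) s := by
        intro a ha b hb hab
        simp only at hab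
        have hdiv := hcase a ha b hb
        have hv : (a : ℕ) = (b : ℕ) := by
          conv_lhs => rw [← Nat.div_add_mod (a : ℕ) p]
          conv_rhs => rw [← Nat.div_add_mod (b : ℕ) p]
          rw [hdiv, hab]
        exact Fin.ext hv
      calc s.ncard ≤ (Set.Iio p).ncard :=
            Set.ncard_le_ncard_of_injOn _ (fun a _ => Nat.mod_lt _ hp0) hinj (Set.finite_Iio p)
        _ = p := by simp [Set.ncard_eq_toFinset_card']
    · push_neg at hcase
      obtain ⟨a, ha, b, hb, hab⟩ := hcase
      have hne : a ≠ b := fun h => hab (by rw [h])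
      have hmod : (a : ℕ) % t = (b : ℕ) % t := by
        by_contra h
        exact hs ha hb hne ((hAdj a b).2 ⟨hab, h⟩)
      have hsub : s ⊆ {a, b} := by
        intro w hw
        by_contra hwab
        simp only [Set.mem_insert_iff, Set.mem_singleton_iff, not_or] at hwab
        obtain ⟨hwa, hwb⟩ := hwab
        have hwa' : ¬ G.Adj w a := hs hw ha hwa
        have hwb' : ¬ G.Adj w b := hs hw hb hwb
        rw [hAdj] at hwa' hwb'
        have hallmod : (w : ℕ) % t = (a : ℕ) % t := by
          by_cases h1 : (w : ℕ) / p = (a : ℕ) / p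
          · by_cases h2 : (w : ℕ) / p = (b : ℕ) / p
            · exact absurd (h1.symm.trans h2) hab
            · have hm : (w : ℕ) % t = (b : ℕ) % t := by
                by_contra hmm; exact hwb' ⟨h2, hmm⟩
              exact hm.trans hmod.symm
          · by_contra hmm; exact hwa' ⟨h1, hmm⟩
        have hval1 : (w : ℕ) ≠ (a : ℕ) := fun h => hwa (Fin.ext h)
        have hval2 : (w : ℕ) ≠ (b : ℕ) := fun h => hwb (Fin.ext h)
        have hval3 : (a : ℕ) ≠ (b : ℕ) := fun h => hne (Fin.ext h)
        exact no_three w.isLt a.isLt b.isLt hallmod (hallmod.trans hmod) hval1 hval2 hval3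
      calc s.ncard ≤ ({a, b} : Set (Fin (2 * t))).ncard :=
            Set.ncard_le_ncard hsub (Set.toFinite _)
        _ ≤ 2 := by
            calc ({a, b} : Set (Fin (2 * t))).ncard ≤ ({b} : Set (Fin (2 * t))).ncard + 1 :=
                  Set.ncard_insert_le a {b}
              _ = 2 := by rw [Set.ncard_singleton]
        _ ≤ p := hp
end
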